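/- arXiv:1103.4875 — 5 statements merged into one kernel-verified Lean document; each statement's English description precedes it below -/
import Mathlib

section
/- A joint degree matrix J is realizable as a simple graph if and only if: (1) for every k, the quantity D_k := (1/k)(J_{k,k} + Σ_l J_{k,l}) is a nonnegative integer; (2) for all k ≠ l, J_{k,l} ≤ D_k·D_l; and (3) for all k, J_{k,k} ≤ C(D_k, 2). -/
/-- The degree of a vertex (cardinality of its neighbor set). -/
noncomputable def gdeg {V : Type*} (G : SimpleGraph V) (v : V) : ℕ :=
  (G.neighborSet v).ncard

/-- The joint degree matrix entry `jdm G k l`: the number of edges of `G`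
whose endpoints have degrees `k` and `l` (each edge counted once). -/
noncomputable def jdm {V : Type*} (G : SimpleGraph V) (k l : ℕ) : ℕ :=
  {e ∈ G.edgeSet | Sym2.map (gdeg G) e = s(k, l)}.ncard

/-- The implied number of degree-`k` vertices derived from a joint degree matrix `J`
(with support contained in degrees `< N`): `D_k = (J_{k,k} + Σ_l J_{k,l}) / k`. -/
def Dof (N : ℕ) (J : ℕ → ℕ → ℕ) (k : ℕ) : ℕ :=
  (J k k + ∑ l ∈ Finset.range N, J k l) / k


/-- number of `t ∈ [a,b)` with `t % D = i`. -/
def cnt (a b D i : ℕ) : ℕ := ((Finset.Ico a b).filter (fun t => t % D = i)).card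

lemma cnt_append {a b c : ℕ} (hab : a ≤ b) (hbc : b ≤ c) (D i : ℕ) :
    cnt a b D i + cnt b c D i = cnt a c D i := by
  unfold cnt
  rw [← Finset.card_union_of_disjoint
      (Finset.disjoint_filter_filter (Finset.Ico_disjoint_Ico_consecutive a b c)),
    ← Finset.filter_union, Finset.Ico_union_Ico_eq_Ico hab hbc]

lemma aux_mod {D r i u : ℕ} (hr : r < D) (hi : i < D) (hu : u < D)
    (h : (r + u) % D = i) : u = (i + D - r) % D := by
  have e1 : (i + D - r) % D = if r ≤ i then i - r else i + D - r := by
    by_cases h2 : r ≤ i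
    · rw [if_pos h2]
      have : i + D - r = (i - r) + D := by omega
      rw [this, Nat.add_mod_right, Nat.mod_eq_of_lt (by omega)]
    · rw [if_neg h2, Nat.mod_eq_of_lt (by omega)]
  have e2 : (r + u) % D = if r + u < D then r + u else r + u - D := by
    by_cases h2 : r + u < D
    · rw [if_pos h2, Nat.mod_eq_of_lt h2]
    · rw [if_neg h2]
      have e : r + u = (r + u - D) + D := by omega
      conv_lhs => rw [e]
      rw [Nat.add_mod_right, Nat.mod_eq_of_lt (by omega)]
  rw [e2] at h
  rw [e1]
  split at h <;> split <;> omega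

lemma cnt_window {D : ℕ} (hD : 0 < D) {i : ℕ} (hi : i < D) (a : ℕ) :
    cnt a (a + D) D i = 1 := by
  have haD := Nat.mod_lt a hD
  unfold cnt
  have : (Finset.Ico a (a + D)).filter (fun t => t % D = i)
      = {a + ((i + D - a % D) % D)} := by
    ext t
    simp only [Finset.mem_filter, Finset.mem_Ico, Finset.mem_singleton]
    constructor
    · rintro ⟨⟨h1, h2⟩, h3⟩
      have hu : t - a < D := by omega
      have h4 : (a % D + (t - a)) % D = i := by
        rw [Nat.mod_add_mod]
        have : a + (t - a) = t := by omega
        rw [this, h3]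
      have := aux_mod haD hi hu h4
      omega
    · rintro rfl
      have h5 : (i + D - a % D) % D < D := Nat.mod_lt _ hD
      refine ⟨⟨by omega, by omega⟩, ?_⟩
      rw [← Nat.mod_add_mod, Nat.add_mod_mod]
      have : a % D + (i + D - a % D) = i + D := by omega
      rw [this, Nat.add_mod_right, Nat.mod_eq_of_lt hi]
  rw [this, Finset.card_singleton]

lemma cnt_multiple {D : ℕ} (hD : 0 < D) {i : ℕ} (hi : i < D) (a c : ℕ) :
    cnt a (a + c * D) D i = c := by
  induction c with
  | zero => simp [cnt]
  | succ n ih =>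
      have e : (n + 1) * D = n * D + D := by ring
      have h1 : a ≤ a + n * D := by omega
      have h2 : a + n * D ≤ a + (n + 1) * D := by omega
      rw [← cnt_append h1 h2, ih]
      have e2 : a + (n + 1) * D = (a + n * D) + D := by omega
      rw [e2, cnt_window hD hi]

lemma cnt_mono {a b b' : ℕ} (h : b ≤ b') (D i : ℕ) : cnt a b D i ≤ cnt a b' D i :=
  Finset.card_le_card (Finset.filter_subset_filter _ (Finset.Ico_subset_Ico le_rfl h))

lemma cnt_le {D : ℕ} (hD : 0 < D) {i : ℕ} (hi : i < D) {a b c : ℕ}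
    (h : b ≤ a + c * D) : cnt a b D i ≤ c := by
  calc cnt a b D i ≤ cnt a (a + c * D) D i := cnt_mono h D i
  _ = c := cnt_multiple hD hi a c

lemma cnt_ge {D : ℕ} (hD : 0 < D) {i : ℕ} (hi : i < D) {a b c : ℕ}
    (h : a + c * D ≤ b) : c ≤ cnt a b D i := by
  calc c = cnt a (a + c * D) D i := (cnt_multiple hD hi a c).symm
  _ ≤ cnt a b D i :=
    Finset.card_le_card (Finset.filter_subset_filter _ (Finset.Ico_subset_Ico le_rfl h))

lemma cnt_balanced {D : ℕ} (hD : 0 < D) {i j : ℕ} (hi : i < D) (hj : j < D)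
    {a b : ℕ} (hab : a ≤ b) : cnt a b D i ≤ cnt a b D j + 1 := by
  have h1 := Nat.div_add_mod (b - a) D
  have h2 := Nat.mod_lt (b - a) hD
  set q := (b - a) / D with hq
  have hA : b ≤ a + (q + 1) * D := by
    have e : (q + 1) * D = D * q + D := by ring
    omega
  have hB : a + q * D ≤ b := by
    have e : q * D = D * q := by ring
    omega
  have h3 : cnt a b D i ≤ q + 1 := cnt_le hD hi hA
  have h4 : q ≤ cnt a b D j := cnt_ge hD hj hB
  omega

lemma cnt_sum {D : ℕ} (hD : 0 < D) (a b : ℕ) :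
    ∑ i ∈ Finset.range D, cnt a b D i = (Finset.Ico a b).card := by
  unfold cnt
  rw [Finset.card_eq_sum_card_fiberwise (f := fun t => t % D) (t := Finset.range D)]
  intro x _
  exact Finset.mem_range.2 (Nat.mod_lt _ hD)



theorem nearreg : ∀ (n : ℕ) (d : Fin n → ℕ),
    (∀ i j, d i ≤ d j + 1) → Even (∑ i, d i) → (∀ i, d i + 1 ≤ n) →
    ∃ G : SimpleGraph (Fin n), ∀ i, gdeg G i = d i := by
  intro n
  induction n with
  | zero => exact fun d _ _ _ => ⟨⊥, fun i => i.elim0⟩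
  | succ n ih =>
    intro d hbal heven hmax
    classical
    set dF : Fin n → ℕ := fun i => d (Fin.castSucc i) with hdF
    set dst : ℕ := d (Fin.last n) with hdst
    have hsumsplit : ∑ i, d i = ∑ i, dF i + dst := Fin.sum_univ_castSucc d
    set T : Finset (Fin n) := Finset.univ.filter (fun i => ∀ j, dF j ≤ dF i) with hT
    have hTmem : ∀ i ∈ T, ∀ j, dF j ≤ dF i := by
      intro i hi j
      simp only [hT, Finset.mem_filter] at hi
      exact hi.2 j
    have hTmem' : ∀ i, (∀ j, dF j ≤ dF i) → i ∈ T := by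
      intro i h
      simp only [hT, Finset.mem_filter]
      exact ⟨Finset.mem_univ _, h⟩
    have hTne : 0 < n → T.Nonempty := by
      intro hn
      obtain ⟨b, -, hb⟩ := Finset.exists_max_image Finset.univ dF ⟨⟨0, hn⟩, Finset.mem_univ _⟩
      exact ⟨b, hTmem' b (fun j => hb j (Finset.mem_univ _))⟩
    have hdstn : dst ≤ n := by
      have h : dst + 1 ≤ n + 1 := hmax (Fin.last n)
      omega
    have hdFn : ∀ i, dF i ≤ n := by
      intro i
      have h : dF i + 1 ≤ n + 1 := hmax (Fin.castSucc i)
      omega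
    -- choose the neighbor set S of the last vertex
    obtain ⟨S, hScard, hSpos, hSbal, hSmax⟩ :
        ∃ S : Finset (Fin n), S.card = dst ∧ (∀ i ∈ S, 1 ≤ dF i) ∧
          (∀ i j : Fin n, dF i - (if i ∈ S then 1 else 0)
              ≤ dF j - (if j ∈ S then 1 else 0) + 1) ∧
          (∀ i : Fin n, dF i - (if i ∈ S then 1 else 0) + 1 ≤ n) := by
      by_cases hbr : dst ≤ T.card
      · -- S is a subset of the set T of maximum-value vertices
        obtain ⟨S, hST, hcard⟩ := Finset.exists_subset_card_eq hbr
        have hmaxS : ∀ i ∈ S, ∀ j, dF j ≤ dF i := fun i hi => hTmem i (hST hi)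
        have hpos : ∀ i ∈ S, 1 ≤ dF i := by
          intro i hi
          by_contra h0
          have hall0 : ∀ j, dF j = 0 := by
            intro j; have := hmaxS i hi j; omega
          have hd1 : dst ≤ 1 := by
            have h2 : dst ≤ dF i + 1 := hbal (Fin.last n) (Fin.castSucc i)
            have h3 := hall0 i
            omega
          have hd2 : 1 ≤ dst := by
            rw [← hcard]
            exact Finset.card_pos.2 ⟨i, hi⟩
          have hsum0 : ∑ j, dF j = 0 := Finset.sum_eq_zero (fun j _ => hall0 j)
          rw [hsumsplit, hsum0] at heven
          rcases heven with ⟨a, ha⟩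
          omega
        refine ⟨S, hcard, hpos, ?_, ?_⟩
        · intro i j
          have h1 : dF i ≤ dF j + 1 := hbal (Fin.castSucc i) (Fin.castSucc j)
          by_cases hj : j ∈ S
          · have := hmaxS j hj i
            simp only [hj, if_true]
            split <;> omega
          · simp only [hj, if_false]
            split <;> omega
        · intro i
          have hi := hdFn i
          have hnpos : 0 < n := i.pos
          by_cases hiS : i ∈ S
          · simp only [hiS, if_true]
            omega
          · simp only [hiS, if_false]
            by_contra hcon
            have hin : dF i = n := by omega
            have hiT : i ∈ T := hTmem' i (fun j => by have := hdFn j; omega)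
            have hssub : S ⊂ T := ⟨hST, fun h => hiS (h hiT)⟩
            have hclt : dst < T.card := hcard ▸ Finset.card_lt_card hssub
            have hTn : T.card ≤ n := by
              have := Finset.card_le_card (Finset.subset_univ T)
              simpa using this
            have hdge : n ≤ dst + 1 := by
              have h4 : dF i ≤ dst + 1 := hbal (Fin.castSucc i) (Fin.last n)
              omega
            have hdeq : dst = n - 1 := by omega
            have hceq : T.card = n := by omega
            have hTuniv : T = Finset.univ := Finset.eq_univ_of_card T (by simpa using hceq)
            have hall : ∀ j, dF j = n := by
              intro j
              have hjT : j ∈ T := hTuniv ▸ Finset.mem_univ j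
              have h5 := hTmem j hjT i
              have h6 := hdFn j
              omega
            have hsn : ∑ j, dF j = n * n := by
              rw [Finset.sum_congr rfl (fun j _ => hall j)]
              simp [Finset.card_univ, mul_comm]
            rw [hsumsplit, hsn, hdeq] at heven
            obtain ⟨a, ha⟩ := heven
            obtain ⟨b, hb⟩ := Nat.even_mul_succ_self n
            have e : n * (n + 1) = n * n + n := by ring
            omega
      · -- S contains T plus some extra non-maximum vertices
        push_neg at hbr
        have hn : 0 < n := by
          rcases Nat.eq_zero_or_pos n with h | h
          · exfalso; omega
          · exact h
        obtain ⟨i0, hi0T⟩ := hTne hn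
        set M : ℕ := dF i0 with hM
        have hub : ∀ x, dF x ≤ M := hTmem i0 hi0T
        have hlb : ∀ x, M ≤ dF x + 1 := fun x =>
          (hbal (Fin.castSucc i0) (Fin.castSucc x) : dF i0 ≤ dF x + 1)
        have hTval : ∀ x ∈ T, dF x = M := fun x hx => le_antisymm (hub x) (hTmem x hx i0)
        have hnotT : ∀ x, x ∉ T → dF x < M := by
          intro x hx
          by_contra h
          exact hx (hTmem' x (fun j => by have := hub j; omega))
        have hcge1 : 1 ≤ T.card := Finset.card_pos.2 ⟨i0, hi0T⟩
        have hMpos : 1 ≤ M := by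
          by_contra h0
          have hall0 : ∀ j, dF j = 0 := by intro j; have := hub j; omega
          have hTuniv : T = Finset.univ :=
            Finset.eq_univ_iff_forall.2 (fun x => hTmem' x (fun j => by rw [hall0 j]; omega))
          have : T.card = n := by rw [hTuniv]; simp
          omega
        have hcompl : dst - T.card ≤ Tᶜ.card := by
          rw [Finset.card_compl]
          simp only [Fintype.card_fin]
          omega
        obtain ⟨E, hET, hEcard⟩ := Finset.exists_subset_card_eq hcompl
        have hdisj : Disjoint T E := by
          refine Finset.disjoint_left.2 (fun a ha hae => ?_)
          have := hET hae
          simp only [Finset.mem_compl] at this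
          exact this ha
        have hEval : ∀ x ∈ E, dF x = M - 1 := by
          intro x hx
          have hxT : x ∉ T := by
            have := hET hx
            simpa only [Finset.mem_compl] using this
          have := hnotT x hxT
          have := hlb x
          omega
        have hM2 : E.Nonempty → 2 ≤ M := by
          rintro ⟨x, hx⟩
          have hx1 : dF x = M - 1 := hEval x hx
          have hdle : dst ≤ dF x + 1 := (hbal (Fin.last n) (Fin.castSucc x) : dst ≤ dF x + 1)
          omega
        set S := T ∪ E with hS
        have hcardS : S.card = dst := by
          rw [hS, Finset.card_union_of_disjoint hdisj, hEcard]
          omega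
        have hval : ∀ x : Fin n, (dF x - (if x ∈ S then 1 else 0)) + 1 = M ∨
            (dF x - (if x ∈ S then 1 else 0)) + 2 = M := by
          intro x
          by_cases hxS : x ∈ S
          · rcases Finset.mem_union.1 hxS with hxT | hxE
            · left
              have := hTval x hxT
              simp only [hxS, if_true]
              omega
            · right
              have h1 := hEval x hxE
              have h2 := hM2 ⟨x, hxE⟩
              simp only [hxS, if_true]
              omega
          · left
            have hxT : x ∉ T := fun h => hxS (Finset.mem_union_left _ h)
            have h1 := hnotT x hxT
            have h2 := hlb x
            simp only [hxS, if_false]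
            omega
        refine ⟨S, hcardS, ?_, ?_, ?_⟩
        · intro x hxS
          rcases Finset.mem_union.1 hxS with hxT | hxE
          · have := hTval x hxT; omega
          · have h1 := hEval x hxE
            have h2 := hM2 ⟨x, hxE⟩
            omega
        · intro i j
          have h1 := hval i
          have h2 := hval j
          omega
        · intro i
          have h1 := hval i
          have h2 := hdFn i0
          omega
    -- the reduced degree sequence
    set d' : Fin n → ℕ := fun i => dF i - (if i ∈ S then 1 else 0) with hd'
    have hsub : ∑ i, d' i + ∑ i, (if i ∈ S then (1:ℕ) else 0) = ∑ i, dF i := by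
      rw [← Finset.sum_add_distrib]
      refine Finset.sum_congr rfl (fun i _ => ?_)
      by_cases h : i ∈ S
      · have := hSpos i h
        simp only [hd', h, if_true]
        omega
      · simp [hd', h]
    have hind : ∑ i, (if i ∈ S then (1:ℕ) else 0) = S.card := by
      rw [Finset.sum_ite_mem, Finset.univ_inter, Finset.sum_const, smul_eq_mul, mul_one]
    have heven' : Even (∑ i, d' i) := by
      rw [hsumsplit] at heven
      obtain ⟨a, ha⟩ := heven
      exact ⟨a - dst, by omega⟩
    obtain ⟨G', hG'⟩ := ih d' hSbal heven'
      (by intro i; exact hSmax i)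
    -- extend the graph by the last vertex joined to S
    set R : Fin (n+1) → Fin (n+1) → Prop := fun x y =>
      (∃ a b : Fin n, G'.Adj a b ∧ x = Fin.castSucc a ∧ y = Fin.castSucc b) ∨
      (x = Fin.last n ∧ ∃ i ∈ S, y = Fin.castSucc i) with hR
    set G : SimpleGraph (Fin (n+1)) := SimpleGraph.fromRel R with hG
    have hcsl : ∀ a : Fin n, Fin.castSucc a ≠ Fin.last n := fun a => (Fin.castSucc_lt_last a).ne
    have hAdj_cc : ∀ i j : Fin n, G.Adj (Fin.castSucc i) (Fin.castSucc j) ↔ G'.Adj i j := by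
      intro i j
      rw [hG]
      simp only [SimpleGraph.fromRel_adj, hR]
      constructor
      · rintro ⟨hne, h | h⟩
        · rcases h with ⟨a, b, hab, ha, hb⟩ | ⟨hl, -⟩
          · rw [Fin.castSucc_inj] at ha hb
            rwa [ha, hb]
          · exact absurd hl (hcsl i)
        · rcases h with ⟨a, b, hab, ha, hb⟩ | ⟨hl, -⟩
          · rw [Fin.castSucc_inj] at ha hb
            rw [ha, hb]
            exact hab.symm
          · exact absurd hl (hcsl j)
      · intro h
        refine ⟨by simpa [Fin.castSucc_inj] using h.ne, Or.inl (Or.inl ⟨i, j, h, rfl, rfl⟩)⟩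
    have hAdj_cl : ∀ i : Fin n, G.Adj (Fin.castSucc i) (Fin.last n) ↔ i ∈ S := by
      intro i
      rw [hG]
      simp only [SimpleGraph.fromRel_adj, hR]
      constructor
      · rintro ⟨hne, h | h⟩
        · rcases h with ⟨a, b, hab, ha, hb⟩ | ⟨hl, -⟩
          · exact absurd hb.symm (hcsl b)
          · exact absurd hl (hcsl i)
        · rcases h with ⟨a, b, hab, ha, hb⟩ | ⟨-, j, hj, hcs⟩
          · exact absurd ha.symm (hcsl a)
          · rw [Fin.castSucc_inj] at hcs
            rwa [hcs]
      · intro h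
        exact ⟨hcsl i, Or.inr (Or.inr ⟨by trivial, i, h, rfl⟩)⟩
    have hnb_cs : ∀ i : Fin n, G.neighborSet (Fin.castSucc i)
        = Fin.castSucc '' (G'.neighborSet i) ∪
          (if i ∈ S then {Fin.last n} else (∅ : Set (Fin (n+1)))) := by
      intro i
      ext y
      refine Fin.lastCases ?_ ?_ y
      · simp only [SimpleGraph.mem_neighborSet, hAdj_cl i, Set.mem_union, Set.mem_image]
        constructor
        · intro h
          right
          simp [h]
        · rintro (⟨a, ha, hcs⟩ | h)
          · exact absurd hcs (hcsl a)
          · by_cases hiS : i ∈ S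
            · exact hiS
            · simp [hiS] at h
      · intro j
        simp only [SimpleGraph.mem_neighborSet, hAdj_cc i j, Set.mem_union, Set.mem_image]
        constructor
        · intro h
          exact Or.inl ⟨j, h, rfl⟩
        · rintro (⟨a, ha, hcs⟩ | h)
          · rw [Fin.castSucc_inj] at hcs
            rwa [← hcs]
          · exfalso
            by_cases hiS : i ∈ S
            · simp [hiS] at h
            · simp [hiS] at h
    have hnb_last : G.neighborSet (Fin.last n) = Fin.castSucc '' (↑S : Set (Fin n)) := by
      ext y
      refine Fin.lastCases ?_ ?_ y
      · simp only [SimpleGraph.mem_neighborSet, Set.mem_image]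
        constructor
        · intro h
          exact absurd rfl h.ne
        · rintro ⟨a, ha, hcs⟩
          exact absurd hcs (hcsl a)
      · intro j
        simp only [SimpleGraph.mem_neighborSet, Set.mem_image, Finset.mem_coe]
        rw [G.adj_comm, hAdj_cl j]
        constructor
        · intro h
          exact ⟨j, h, rfl⟩
        · rintro ⟨a, ha, hcs⟩
          rw [Fin.castSucc_inj] at hcs
          rwa [← hcs]
    refine ⟨G, ?_⟩
    intro x
    refine Fin.lastCases ?_ ?_ x
    · rw [gdeg, hnb_last, Set.ncard_image_of_injective _ (Fin.castSucc_injective n),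
        Set.ncard_coe_finset, hScard]
    · intro i
      rw [gdeg, hnb_cs i]
      by_cases hiS : i ∈ S
      · rw [if_pos hiS, Set.union_singleton,
          Set.ncard_insert_of_notMem (by
            rintro ⟨a, ha, hcs⟩
            exact (hcsl a) hcs) (Set.toFinite _),
          Set.ncard_image_of_injective _ (Fin.castSucc_injective n)]
        have h1 : (G'.neighborSet i).ncard = d' i := hG' i
        have h2 := hSpos i hiS
        have h3 : dF i = d (Fin.castSucc i) := rfl
        simp only [hd', hiS, if_true] at h1
        omega
      · rw [if_neg hiS, Set.union_empty,
          Set.ncard_image_of_injective _ (Fin.castSucc_injective n)]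
        have h1 : (G'.neighborSet i).ncard = d' i := hG' i
        have h3 : dF i = d (Fin.castSucc i) := rfl
        simp only [hd', hiS, if_false] at h1
        omega





lemma jdm_symm {V : Type*} (G : SimpleGraph V) (k l : ℕ) : jdm G k l = jdm G l k := by
  unfold jdm
  congr 1
  ext e
  simp only [Set.mem_setOf_eq, and_congr_right_iff]
  intro _
  constructor <;> intro h <;> rw [h, Sym2.eq_swap]

section Nec

variable {nV : ℕ} (G : SimpleGraph (Fin nV))

noncomputable local instance : Fintype G.edgeSet := Fintype.ofFinite _

noncomputable def jfin (k l : ℕ) : Finset (Sym2 (Fin nV)) :=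
  G.edgeFinset.filter (fun e => Sym2.map (gdeg G) e = s(k, l))

lemma jdm_eq_card (k l : ℕ) : jdm G k l = (jfin G k l).card := by
  rw [jdm, ← Set.ncard_coe_finset]
  congr 1
  ext e
  simp [jfin, SimpleGraph.mem_edgeFinset, Set.mem_setOf_eq]

lemma gdeg_pos {a b : Fin nV} (h : G.Adj a b) : 1 ≤ gdeg G a := by
  rw [gdeg, Nat.succ_le_iff]
  rw [Set.ncard_pos (Set.toFinite _)]
  exact ⟨b, h⟩

theorem necessity (N : ℕ) (J : ℕ → ℕ → ℕ)
    (hsym : ∀ k l, J k l = J l k)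
    (hzero : ∀ l, J 0 l = 0)
    (hsupp : ∀ k l, N ≤ k → J k l = 0)
    (hJ : ∀ k l, k ≤ l → jdm G k l = J k l) :
    (∀ k, 0 < k → k ∣ (J k k + ∑ l ∈ Finset.range N, J k l)) ∧
      (∀ k l, k ≠ l → J k l ≤ Dof N J k * Dof N J l) ∧
      (∀ k, J k k ≤ (Dof N J k).choose 2) := by
  classical
  have hJall : ∀ k l, jdm G k l = J k l := by
    intro k l
    rcases le_total k l with h | h
    · exact hJ k l h
    · rw [jdm_symm, hJ l k h, hsym]
  -- no vertex incident to an edge has degree ≥ N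
  have hdegedge : ∀ a b : Fin nV, G.Adj a b → 1 ≤ gdeg G a ∧ gdeg G a < N := by
    intro a b hab
    refine ⟨gdeg_pos G hab, ?_⟩
    by_contra hge
    push_neg at hge
    have hz : jdm G (gdeg G a) (gdeg G b) = 0 := by
      rw [hJall]
      exact hsupp _ _ hge
    rw [jdm_eq_card] at hz
    have hmem : s(a, b) ∈ jfin G (gdeg G a) (gdeg G b) := by
      simp [jfin, SimpleGraph.mem_edgeFinset, hab]
    rw [Finset.card_eq_zero] at hz
    rw [hz] at hmem
    exact absurd hmem (Finset.notMem_empty _)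
  set Dk : ℕ → Finset (Fin nV) := fun k => Finset.univ.filter (fun v => gdeg G v = k) with hDk
  have hgdeg_card : ∀ v, gdeg G v = (G.edgeFinset.filter (fun e => v ∈ e)).card := by
    intro v
    have h1 : (↑(G.incidenceFinset v) : Set (Sym2 (Fin nV))) = G.incidenceSet v := by
      ext e
      simp [SimpleGraph.mem_incidenceFinset]
    have h2 : gdeg G v = (G.incidenceFinset v).card := by
      rw [gdeg, SimpleGraph.card_incidenceFinset_eq_degree, ← SimpleGraph.card_neighborFinset_eq_degree,
        ← Set.ncard_coe_finset]
      congr 1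
      ext w
      simp [SimpleGraph.mem_neighborFinset]
    rw [h2]
    congr 1
    ext e
    simp [SimpleGraph.mem_incidenceFinset, SimpleGraph.incidenceSet,
      SimpleGraph.mem_edgeFinset]
  -- the key double counting identity
  have key : ∀ k, 1 ≤ k → k < N →
      k * (Dk k).card = J k k + ∑ l ∈ Finset.range N, J k l := by
    intro k hk1 hkN
    have step1 : k * (Dk k).card = ∑ v ∈ Dk k, gdeg G v := by
      rw [Finset.sum_congr rfl (fun v hv => by
        simp only [hDk, Finset.mem_filter] at hv
        exact hv.2)]
      rw [Finset.sum_const, smul_eq_mul, mul_comm]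
    have pointwise : ∀ e ∈ G.edgeFinset, ((Dk k).filter (fun v => v ∈ e)).card
        = (if Sym2.map (gdeg G) e = s(k, k) then 1 else 0)
          + ∑ l ∈ Finset.range N, (if Sym2.map (gdeg G) e = s(k, l) then 1 else 0) := by
      intro e he
      induction e using Sym2.ind with
      | _ a b =>
        rw [SimpleGraph.mem_edgeFinset, SimpleGraph.mem_edgeSet] at he
        have hne : a ≠ b := he.ne
        have hda := hdegedge a b he
        have hdb := hdegedge b a he.symm
        have hfilter : (Dk k).filter (fun v => v ∈ s(a, b))
            = ({a, b} : Finset (Fin nV)).filter (fun v => gdeg G v = k) := by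
          ext v
          simp only [hDk, Finset.mem_filter, Finset.mem_univ, true_and, Sym2.mem_iff,
            Finset.mem_insert, Finset.mem_singleton]
          tauto
        rw [hfilter, Sym2.map_pair_eq]
        by_cases ha : gdeg G a = k <;> by_cases hb : gdeg G b = k
        · have h1 : ({a, b} : Finset (Fin nV)).filter (fun v => gdeg G v = k) = {a, b} := by
            refine Finset.filter_eq_self.2 (fun v hv => ?_)
            rcases Finset.mem_insert.1 hv with rfl | hv
            · exact ha
            · rw [Finset.mem_singleton] at hv
              rw [hv]
              exact hb
          rw [h1, Finset.card_pair hne]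
          rw [ha, hb, if_pos rfl]
          have h3 : ∀ l ∈ Finset.range N, (if s(k, k) = s(k, l) then (1:ℕ) else 0)
              = if l = k then 1 else 0 := by
            intro l _
            by_cases hl : l = k
            · rw [if_pos hl, if_pos (by rw [hl])]
            · rw [if_neg hl, if_neg (fun hcon => hl (Sym2.congr_right.1 hcon).symm)]
          rw [Finset.sum_congr rfl h3, Finset.sum_ite_eq' (Finset.range N) k (fun _ => (1:ℕ)),
            if_pos (Finset.mem_range.2 hkN)]
        · have h1 : ({a, b} : Finset (Fin nV)).filter (fun v => gdeg G v = k) = {a} := by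
            ext v
            simp only [Finset.mem_filter, Finset.mem_insert, Finset.mem_singleton]
            constructor
            · rintro ⟨rfl | rfl, h⟩
              · rfl
              · exact absurd h hb
            · rintro rfl
              exact ⟨Or.inl rfl, ha⟩
          rw [h1, Finset.card_singleton, ha]
          rw [if_neg (fun hcon => hb (Sym2.congr_right.1 hcon))]
          have h3 : ∀ l ∈ Finset.range N, (if s(k, gdeg G b) = s(k, l) then (1:ℕ) else 0)
              = if l = gdeg G b then 1 else 0 := by
            intro l _
            by_cases hl : l = gdeg G b
            · rw [if_pos (by rw [hl]), if_pos hl]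
            · rw [if_neg (fun hcon => hl (Sym2.congr_right.1 hcon).symm), if_neg hl]
          rw [Finset.sum_congr rfl h3,
            Finset.sum_ite_eq' (Finset.range N) (gdeg G b) (fun _ => (1:ℕ)),
            if_pos (Finset.mem_range.2 hdb.2)]
        · have h1 : ({a, b} : Finset (Fin nV)).filter (fun v => gdeg G v = k) = {b} := by
            ext v
            simp only [Finset.mem_filter, Finset.mem_insert, Finset.mem_singleton]
            constructor
            · rintro ⟨rfl | rfl, h⟩
              · exact absurd h ha
              · rfl
            · rintro rfl
              exact ⟨Or.inr rfl, hb⟩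
          rw [h1, Finset.card_singleton, hb]
          have hswap : s(gdeg G a, k) = s(k, gdeg G a) := Sym2.eq_swap
          rw [hswap]
          rw [if_neg (fun hcon => ha (Sym2.congr_right.1 hcon))]
          have h3 : ∀ l ∈ Finset.range N, (if s(k, gdeg G a) = s(k, l) then (1:ℕ) else 0)
              = if l = gdeg G a then 1 else 0 := by
            intro l _
            by_cases hl : l = gdeg G a
            · rw [if_pos (by rw [hl]), if_pos hl]
            · rw [if_neg (fun hcon => hl (Sym2.congr_right.1 hcon).symm), if_neg hl]
          rw [Finset.sum_congr rfl h3,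
            Finset.sum_ite_eq' (Finset.range N) (gdeg G a) (fun _ => (1:ℕ)),
            if_pos (Finset.mem_range.2 hda.2)]
        · have h1 : ({a, b} : Finset (Fin nV)).filter (fun v => gdeg G v = k) = ∅ := by
            ext v
            simp only [Finset.mem_filter, Finset.mem_insert, Finset.mem_singleton,
              Finset.notMem_empty, iff_false, not_and]
            rintro (rfl | rfl)
            · exact ha
            · exact hb
          rw [h1, Finset.card_empty]
          have hnk : ∀ l : ℕ, s(gdeg G a, gdeg G b) ≠ s(k, l) := by
            intro l hcon
            rw [Sym2.eq_iff] at hcon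
            rcases hcon with ⟨h4, -⟩ | ⟨-, h5⟩
            · exact ha h4
            · exact hb h5
          rw [if_neg (hnk k), Finset.sum_eq_zero (fun l _ => if_neg (hnk l))]
          simp
    have step2 : ∑ v ∈ Dk k, gdeg G v
        = (jfin G k k).card + ∑ l ∈ Finset.range N, (jfin G k l).card := by
      have e1 : ∑ v ∈ Dk k, gdeg G v
          = ∑ v ∈ Dk k, ∑ e ∈ G.edgeFinset, (if v ∈ e then (1:ℕ) else 0) := by
        refine Finset.sum_congr rfl (fun v _ => ?_)
        rw [hgdeg_card v, Finset.card_filter]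
      rw [e1, Finset.sum_comm]
      have e2 : ∀ e ∈ G.edgeFinset, ∑ v ∈ Dk k, (if v ∈ e then (1:ℕ) else 0)
          = (if Sym2.map (gdeg G) e = s(k, k) then 1 else 0)
            + ∑ l ∈ Finset.range N, (if Sym2.map (gdeg G) e = s(k, l) then 1 else 0) := by
        intro e he
        rw [← Finset.card_filter]
        exact pointwise e he
      rw [Finset.sum_congr rfl e2, Finset.sum_add_distrib, Finset.sum_comm]
      congr 1
      · rw [← Finset.card_filter]
        rfl
      · refine Finset.sum_congr rfl (fun l _ => ?_)
        rw [← Finset.card_filter]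
        rfl
    rw [step1, step2, ← jdm_eq_card, hJall]
    congr 1
    refine Finset.sum_congr rfl (fun l _ => ?_)
    rw [← jdm_eq_card, hJall]
  -- the three conclusions
  have hJzero : ∀ k l, (k = 0 ∨ l = 0 ∨ N ≤ k ∨ N ≤ l) → J k l = 0 := by
    intro k l h
    rcases h with rfl | rfl | h | h
    · exact hzero l
    · rw [hsym]; exact hzero k
    · exact hsupp k l h
    · rw [hsym]; exact hsupp l k h
  have hDof : ∀ k, 1 ≤ k → k < N → Dof N J k = (Dk k).card := by
    intro k hk1 hkN
    rw [Dof, ← key k hk1 hkN, Nat.mul_div_cancel_left _ hk1]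
  refine ⟨?_, ?_, ?_⟩
  · intro k hk
    by_cases hkN : k < N
    · exact ⟨_, (key k hk hkN).symm⟩
    · push_neg at hkN
      have h1 : J k k = 0 := hsupp k k hkN
      have h2 : ∑ l ∈ Finset.range N, J k l = 0 :=
        Finset.sum_eq_zero (fun l _ => hsupp k l hkN)
      rw [h1, h2]
      simp
  · intro k l hkl
    by_cases htriv : k = 0 ∨ l = 0 ∨ N ≤ k ∨ N ≤ l
    · rw [hJzero k l htriv]
      exact Nat.zero_le _
    · push_neg at htriv
      obtain ⟨hk0, hl0, hkN, hlN⟩ := htriv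
      have hk1 : 1 ≤ k := Nat.pos_of_ne_zero hk0
      have hl1 : 1 ≤ l := Nat.pos_of_ne_zero hl0
      rw [← hJall k l, jdm_eq_card, hDof k hk1 hkN, hDof l hl1 hlN]
      rw [← Finset.card_product]
      have hprop : ∀ e ∈ jfin G k l, ∃ p : Fin nV × Fin nV,
          e = s(p.1, p.2) ∧ gdeg G p.1 = k ∧ gdeg G p.2 = l := by
        intro e he
        induction e using Sym2.ind with
        | _ a b =>
          simp only [jfin, Finset.mem_filter, Sym2.map_pair_eq] at he
          rw [Sym2.eq_iff] at he
          rcases he.2 with ⟨h1, h2⟩ | ⟨h1, h2⟩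
          · exact ⟨(a, b), rfl, h1, h2⟩
          · exact ⟨(b, a), Sym2.eq_swap, h2, h1⟩
      rcases Finset.eq_empty_or_nonempty (jfin G k l) with hemp | ⟨e0, he0⟩
      · rw [hemp]
        simp
      · obtain ⟨p0, -, -, -⟩ := hprop e0 he0
        set f : Sym2 (Fin nV) → Fin nV × Fin nV := fun e =>
          if h : ∃ p : Fin nV × Fin nV, e = s(p.1, p.2) ∧ gdeg G p.1 = k ∧ gdeg G p.2 = l
          then h.choose else p0 with hf
        refine Finset.card_le_card_of_injOn f ?_ ?_
        · intro e he
          have hp := hprop e he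
          rw [hf]
          simp only [dif_pos hp]
          obtain ⟨he1, he2, he3⟩ := hp.choose_spec
          rw [Finset.mem_coe, Finset.mem_product]
          constructor <;> simp [hDk, he2, he3]
        · intro e he e' he' heq
          have hp := hprop e he
          have hp' := hprop e' he'
          simp only [hf, dif_pos hp, dif_pos hp'] at heq
          obtain ⟨he1, -, -⟩ := hp.choose_spec
          obtain ⟨he1', -, -⟩ := hp'.choose_spec
          rw [he1, he1', heq]
  · intro k
    by_cases htriv : k = 0 ∨ N ≤ k
    · have : J k k = 0 := by
        rcases htriv with rfl | h
        · exact hzero 0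
        · exact hsupp k k h
      rw [this]
      exact Nat.zero_le _
    · push_neg at htriv
      obtain ⟨hk0, hkN⟩ := htriv
      have hk1 : 1 ≤ k := Nat.pos_of_ne_zero hk0
      rw [← hJall k k, jdm_eq_card, hDof k hk1 hkN]
      rw [← Finset.card_powersetCard 2 (Dk k)]
      rcases Finset.eq_empty_or_nonempty (jfin G k k) with hemp | ⟨e0, he0⟩
      · rw [hemp]
        simp
      · have hprop : ∀ e ∈ jfin G k k, ∃ p : Fin nV × Fin nV,
            e = s(p.1, p.2) ∧ gdeg G p.1 = k ∧ gdeg G p.2 = k ∧ p.1 ≠ p.2 := by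
          intro e he
          induction e using Sym2.ind with
          | _ a b =>
            simp only [jfin, Finset.mem_filter, Sym2.map_pair_eq,
              SimpleGraph.mem_edgeFinset, SimpleGraph.mem_edgeSet] at he
            have hne : a ≠ b := he.1.ne
            rw [Sym2.eq_iff] at he
            rcases he.2 with ⟨h1, h2⟩ | ⟨h1, h2⟩
            · exact ⟨(a, b), rfl, h1, h2, hne⟩
            · exact ⟨(a, b), rfl, h1, h2, hne⟩
        set f : Sym2 (Fin nV) → Finset (Fin nV) := fun e =>
          if h : ∃ p : Fin nV × Fin nV,
              e = s(p.1, p.2) ∧ gdeg G p.1 = k ∧ gdeg G p.2 = k ∧ p.1 ≠ p.2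
          then {h.choose.1, h.choose.2} else ∅ with hf
        refine Finset.card_le_card_of_injOn f ?_ ?_
        · intro e he
          have hp := hprop e he
          rw [hf]
          simp only [dif_pos hp]
          obtain ⟨he1, he2, he3, he4⟩ := hp.choose_spec
          rw [Finset.mem_coe, Finset.mem_powersetCard]
          constructor
          · rw [Finset.insert_subset_iff, Finset.singleton_subset_iff]
            constructor <;> simp [hDk, he2, he3]
          · exact Finset.card_pair he4
        · intro e he e' he' heq
          have hp := hprop e he
          have hp' := hprop e' he'
          simp only [hf, dif_pos hp, dif_pos hp'] at heq
          obtain ⟨he1, -, -, hne⟩ := hp.choose_spec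
          obtain ⟨he1', -, -, hne'⟩ := hp'.choose_spec
          have hmem : hp.choose.1 ∈ ({hp'.choose.1, hp'.choose.2} : Finset (Fin nV)) := by
            rw [← heq]
            exact Finset.mem_insert_self _ _
          have hmem2 : hp.choose.2 ∈ ({hp'.choose.1, hp'.choose.2} : Finset (Fin nV)) := by
            rw [← heq]
            exact Finset.mem_insert_of_mem (Finset.mem_singleton_self _)
          simp only [Finset.mem_insert, Finset.mem_singleton] at hmem hmem2
          rw [he1, he1', Sym2.eq_iff]
          rcases hmem with h1 | h1
          · rcases hmem2 with h2 | h2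
            · exact absurd (h1.trans h2.symm) hne
            · exact Or.inl ⟨h1, h2⟩
          · rcases hmem2 with h2 | h2
            · exact Or.inr ⟨h1, h2⟩
            · exact absurd (h1.trans h2.symm) hne
  
end Nec







lemma cnt_self (a D i : ℕ) : cnt a a D i = 0 := by simp [cnt]

lemma cnt_card_range (a L D i : ℕ) :
    ((Finset.range L).filter (fun m => (m + a) % D = i)).card = cnt a (a + L) D i := by
  unfold cnt
  refine Finset.card_bij' (fun m _ => m + a) (fun t _ => t - a) ?_ ?_ ?_ ?_
  · intro m hm
    simp only [Finset.mem_filter, Finset.mem_range] at hm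
    simp only [Finset.mem_filter, Finset.mem_Ico]
    exact ⟨⟨by omega, by omega⟩, hm.2⟩
  · intro t ht
    simp only [Finset.mem_filter, Finset.mem_Ico] at ht
    simp only [Finset.mem_filter, Finset.mem_range]
    constructor
    · omega
    · have : t - a + a = t := by omega
      rw [this]
      exact ht.2
  · intro m _
    show m + a - a = m
    omega
  · intro t ht
    simp only [Finset.mem_filter, Finset.mem_Ico] at ht
    show t - a + a = t
    omega

lemma gdeg_eq_card_filter {W : Type*} [Fintype W] (G : SimpleGraph W)
    [DecidableRel G.Adj] (v : W) :
    gdeg G v = (Finset.univ.filter (fun w => G.Adj v w)).card := by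
  rw [gdeg, ← Set.ncard_coe_finset]
  congr 1
  ext w
  simp [SimpleGraph.mem_neighborSet]

lemma gdeg_eq_degree {W : Type*} [Fintype W] (G : SimpleGraph W)
    [DecidableRel G.Adj] (v : W) : gdeg G v = G.degree v := by
  rw [← SimpleGraph.card_neighborFinset_eq_degree, gdeg, ← Set.ncard_coe_finset]
  congr 1
  ext w
  simp [SimpleGraph.mem_neighborFinset]

section Suf

variable (N : ℕ) (J : ℕ → ℕ → ℕ)

def PP (k l : ℕ) : ℕ := ∑ l' ∈ Finset.range l, if l' = k then 0 else J k l'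

def SS (k l i : ℕ) : ℕ :=
  ∑ i' ∈ Finset.range i, cnt (PP J k l) (PP J k l + J k l) (Dof N J k) i'

def CrossR (k l i j : ℕ) : Prop :=
  ∃ m, m < J k l ∧ SS N J k l i ≤ m ∧ m < SS N J k l (i + 1) ∧
    (m + PP J l k) % Dof N J l = j

def dI (k i : ℕ) : ℕ := cnt (PP J k N) (k * Dof N J k) (Dof N J k) i

abbrev Vtx := (k : Fin N) × Fin (Dof N J k.val)

def bigG (GI : ∀ k : ℕ, SimpleGraph (Fin (Dof N J k))) : SimpleGraph (Vtx N J) :=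
  SimpleGraph.fromRel (fun x y =>
    ((x.1 : ℕ) = (y.1 : ℕ) ∧ ∃ (ha : (x.2 : ℕ) < Dof N J x.1)
        (hb : (y.2 : ℕ) < Dof N J x.1), (GI x.1).Adj ⟨x.2, ha⟩ ⟨y.2, hb⟩) ∨
    ((x.1 : ℕ) < (y.1 : ℕ) ∧ CrossR N J x.1 y.1 x.2 y.2))

theorem sufficiency
    (hsym : ∀ k l, J k l = J l k)
    (hzero : ∀ l, J 0 l = 0)
    (hsupp : ∀ k l, N ≤ k → J k l = 0)
    (hdvd : ∀ k, 0 < k → k ∣ (J k k + ∑ l ∈ Finset.range N, J k l))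
    (hle2 : ∀ k l, k ≠ l → J k l ≤ Dof N J k * Dof N J l)
    (hle3 : ∀ k, J k k ≤ (Dof N J k).choose 2) :
    ∃ (n : ℕ) (G : SimpleGraph (Fin n)), ∀ k l, k ≤ l → jdm G k l = J k l := by
  classical
  set D := Dof N J with hD
  -- key arithmetic facts
  have hkey : ∀ k, 0 < k → k * D k = J k k + ∑ l ∈ Finset.range N, J k l := by
    intro k hk
    obtain ⟨c, hc⟩ := hdvd k hk
    rw [hD, Dof, hc, Nat.mul_div_cancel_left _ hk]
  have hD0 : D 0 = 0 := by simp [hD, Dof]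
  have hDbig : ∀ k, N ≤ k → D k = 0 := by
    intro k hk
    rw [hD, Dof, hsupp k k hk, Finset.sum_eq_zero (fun l _ => hsupp k l hk)]
    simp
  have hJDzero : ∀ k l, D k = 0 → l < N → J k l = 0 := by
    intro k l hDk hlN
    rcases Nat.eq_zero_or_pos k with rfl | hk
    · exact hzero l
    · have h1 := hkey k hk
      rw [hDk, Nat.mul_zero] at h1
      have h2 : ∑ l' ∈ Finset.range N, J k l' = 0 := by omega
      exact Finset.sum_eq_zero_iff.1 h2.symm.symm l (Finset.mem_range.2 hlN)
  have hPPsucc : ∀ k l, PP J k (l + 1) = PP J k l + (if l = k then 0 else J k l) := by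
    intro k l
    rw [PP, Finset.sum_range_succ, PP]
  have hPP0 : ∀ k, PP J k 0 = 0 := by intro k; simp [PP]
  have hPPmono : ∀ k l, PP J k l ≤ PP J k (l + 1) := by
    intro k l
    rw [hPPsucc]
    omega
  have hPPN : ∀ k, 0 < k → k < N → PP J k N + 2 * J k k = k * D k := by
    intro k hk hkN
    have h1 : PP J k N + ∑ l ∈ Finset.range N, (if l = k then J k l else 0)
        = ∑ l ∈ Finset.range N, J k l := by
      rw [PP, ← Finset.sum_add_distrib]
      refine Finset.sum_congr rfl (fun l _ => ?_)
      by_cases h : l = k <;> simp [h]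
    have h2 : ∑ l ∈ Finset.range N, (if l = k then J k l else 0) = J k k := by
      rw [Finset.sum_ite_eq' (Finset.range N) k (J k), if_pos (Finset.mem_range.2 hkN)]
    have h3 := hkey k hk
    omega
  -- the internal graphs
  have hGIex : ∀ k : ℕ, ∃ Gk : SimpleGraph (Fin (D k)), ∀ i : Fin (D k),
      gdeg Gk i = dI N J k ↑i := by
    intro k
    rcases Nat.eq_zero_or_pos (D k) with hDk | hDk
    · exact ⟨⊥, fun i => absurd i.isLt (by omega)⟩
    · have hk1 : 0 < k := by
        by_contra h
        have : k = 0 := by omega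
        rw [this] at hDk
        omega
      have hkN : k < N := by
        by_contra h
        have := hDbig k (by omega)
        omega
      have hPN := hPPN k hk1 hkN
      have hab : PP J k N ≤ k * D k := by omega
      have h2J : 2 * J k k ≤ (D k - 1) * D k := by
        have hc := hle3 k
        rw [Nat.choose_two_right] at hc
        have h4 : D k * (D k - 1) / 2 * 2 ≤ D k * (D k - 1) := Nat.div_mul_le_self _ _
        have h5 : (D k - 1) * D k = D k * (D k - 1) := Nat.mul_comm _ _
        omega
      refine nearreg (D k) (fun i => dI N J k ↑i) ?_ ?_ ?_
      · intro i j
        exact cnt_balanced hDk i.isLt j.isLt hab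
      · have hsum : ∑ i : Fin (D k), dI N J k ↑i
            = ∑ i ∈ Finset.range (D k), cnt (PP J k N) (k * D k) (D k) i := by
          rw [Fin.sum_univ_eq_sum_range]
          rfl
        rw [hsum, cnt_sum hDk, Nat.card_Ico]
        exact ⟨J k k, by omega⟩
      · intro i
        have h6 : cnt (PP J k N) (k * D k) (D k) ↑i ≤ D k - 1 :=
          cnt_le hDk i.isLt (by omega)
        show dI N J k ↑i + 1 ≤ D k
        have h7 : dI N J k ↑i ≤ D k - 1 := h6
        omega
  choose GI hGI using hGIex
  set G0 : SimpleGraph (Vtx N J) := bigG N J GI with hG0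
  -- basic facts about SS
  have hSS0 : ∀ k l, SS N J k l 0 = 0 := by intro k l; simp [SS]
  have hSSsucc : ∀ k l i, SS N J k l (i + 1)
      = SS N J k l i + cnt (PP J k l) (PP J k l + J k l) (D k) i := by
    intro k l i
    rw [SS, Finset.sum_range_succ, SS]
  have hSSmono : ∀ k l i i', i ≤ i' → SS N J k l i ≤ SS N J k l i' := by
    intro k l i i' h
    exact Finset.sum_le_sum_of_subset (Finset.range_subset_range.2 h)
  have hSSlast : ∀ k l, 0 < D k → SS N J k l (D k) = J k l := by
    intro k l hDk
    rw [SS, cnt_sum hDk, Nat.card_Ico]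
    omega
  have hfib : ∀ k l m, 0 < D k → m < J k l →
      Nat.findGreatest (fun j => SS N J k l j ≤ m) (D k) < D k ∧
      SS N J k l (Nat.findGreatest (fun j => SS N J k l j ≤ m) (D k)) ≤ m ∧
      m < SS N J k l (Nat.findGreatest (fun j => SS N J k l j ≤ m) (D k) + 1) := by
    intro k l m hDk hm
    set fg := Nat.findGreatest (fun j => SS N J k l j ≤ m) (D k) with hfg
    have h0 : SS N J k l 0 ≤ m := by rw [hSS0]; omega
    have hspec : SS N J k l fg ≤ m := by
      rw [hfg]
      exact Nat.findGreatest_spec (P := fun j => SS N J k l j ≤ m) (m := 0)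
        (Nat.zero_le _) h0
    have hle : fg ≤ D k := Nat.findGreatest_le _
    have hlt : fg < D k := by
      rcases Nat.lt_or_ge fg (D k) with h | h
      · exact h
      · exfalso
        have : fg = D k := by omega
        rw [this, hSSlast k l hDk] at hspec
        omega
    refine ⟨hlt, hspec, ?_⟩
    by_contra hcon
    push_neg at hcon
    exact Nat.findGreatest_is_greatest (P := fun j => SS N J k l j ≤ m)
      (by omega : fg < fg + 1) (by omega) hcon
  have hfibu : ∀ k l m j j', j < D k → j' < D k →
      SS N J k l j ≤ m → m < SS N J k l (j + 1) →
      SS N J k l j' ≤ m → m < SS N J k l (j' + 1) → j = j' := by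
    intro k l m j j' hj hj' h1 h2 h3 h4
    rcases lt_trichotomy j j' with h | h | h
    · exfalso
      have := hSSmono k l (j + 1) j' h
      omega
    · exact h
    · exfalso
      have := hSSmono k l (j' + 1) j h
      omega
  have hfibsize : ∀ k l i, k ≠ l → i < D k → 0 < D k →
      cnt (PP J k l) (PP J k l + J k l) (D k) i ≤ D l := by
    intro k l i hkl hi hDk
    refine cnt_le hDk hi ?_
    have := hle2 k l hkl
    have e : D l * D k = D k * D l := Nat.mul_comm _ _
    omega
  -- adjacency characterisations
  have hadj_cc : ∀ (k : Fin N) (i j : Fin (D ↑k)),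
      G0.Adj ⟨k, i⟩ ⟨k, j⟩ ↔ (GI ↑k).Adj i j := by
    intro k i j
    rw [hG0]
    simp only [bigG, SimpleGraph.fromRel_adj]
    constructor
    · rintro ⟨hne, h | h⟩
      · rcases h with ⟨-, ha, hb, hadj⟩ | ⟨hlt, -⟩
        · rwa [Fin.eta, Fin.eta] at hadj
        · exact absurd hlt (lt_irrefl _)
      · rcases h with ⟨-, ha, hb, hadj⟩ | ⟨hlt, -⟩
        · rw [Fin.eta, Fin.eta] at hadj
          exact hadj.symm
        · exact absurd hlt (lt_irrefl _)
    · intro h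
      refine ⟨?_, Or.inl (Or.inl ⟨by trivial, i.isLt, j.isLt, ?_⟩)⟩
      · intro hc
        have hij : i = j := by
          cases hc
          rfl
        exact h.ne hij
      · simp only [Fin.eta]
        exact h
  have hadj_cross : ∀ (k l : Fin N), (↑k : ℕ) < ↑l → ∀ (i : Fin (D ↑k)) (j : Fin (D ↑l)),
      G0.Adj ⟨k, i⟩ ⟨l, j⟩ ↔ CrossR N J ↑k ↑l ↑i ↑j := by
    intro k l hkl i j
    rw [hG0]
    simp only [bigG, SimpleGraph.fromRel_adj]
    constructor
    · rintro ⟨hne, h | h⟩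
      · rcases h with ⟨heq, -⟩ | ⟨-, hcr⟩
        · exact absurd heq (by omega)
        · exact hcr
      · rcases h with ⟨heq, -⟩ | ⟨hlt, -⟩
        · exact absurd heq (by omega)
        · exact absurd hlt (by omega)
    · intro h
      refine ⟨?_, Or.inl (Or.inr ⟨hkl, h⟩)⟩
      intro hc
      have h3 : (↑k : ℕ) = ↑l := by
        have := congrArg (fun x : Vtx N J => (x.1 : ℕ)) hc
        simpa using this
      omega
  -- every vertex of class k has degree k
  have hdeg : ∀ v : Vtx N J, gdeg G0 v = ↑v.1 := by
    rintro ⟨k, i⟩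
    have hDk : 0 < D ↑k := i.pos
    have hk1 : 0 < (↑k : ℕ) := by
      by_contra h
      have h0 : (↑k : ℕ) = 0 := by omega
      rw [h0] at hDk
      omega
    have hkN : (↑k : ℕ) < N := k.isLt
    rw [gdeg_eq_card_filter]
    have hsplit : (Finset.univ.filter (fun w => G0.Adj ⟨k, i⟩ w))
        = Finset.univ.sigma (fun l : Fin N =>
            Finset.univ.filter (fun j : Fin (D ↑l) => G0.Adj ⟨k, i⟩ ⟨l, j⟩)) := by
      ext w
      obtain ⟨l, j⟩ := w
      simp [Finset.mem_sigma]
    rw [hsplit, Finset.card_sigma]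
    have hCl : ∀ l : Fin N,
        (Finset.univ.filter (fun j : Fin (D ↑l) => G0.Adj ⟨k, i⟩ ⟨l, j⟩)).card
        = cnt (PP J ↑k ↑l) (PP J ↑k ↑l + (if (↑l : ℕ) = ↑k then 0 else J ↑k ↑l)) (D ↑k) ↑i
          + (if (↑l : ℕ) = ↑k then dI N J ↑k ↑i else 0) := by
      intro l
      rcases lt_trichotomy (↑l : ℕ) (↑k : ℕ) with hlt | heq | hgt
      · -- l < k : this vertex is on the "mod" side of the pair (l,k)
        rw [if_neg (by omega), if_neg (by omega), Nat.add_zero]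
        have hfilter : (Finset.univ.filter (fun j : Fin (D ↑l) => G0.Adj ⟨k, i⟩ ⟨l, j⟩))
            = Finset.univ.filter (fun j : Fin (D ↑l) => CrossR N J ↑l ↑k ↑j ↑i) := by
          ext j
          simp only [Finset.mem_filter, Finset.mem_univ, true_and]
          rw [G0.adj_comm, hadj_cross l k hlt j i]
        rw [hfilter]
        rcases Nat.eq_zero_or_pos (J ↑l ↑k) with hJ0 | hJpos
        · have hJkl : J ↑k ↑l = 0 := by rw [hsym]; exact hJ0
          have hemp : (Finset.univ.filter (fun j : Fin (D ↑l) => CrossR N J ↑l ↑k ↑j ↑i))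
              = ∅ := by
            ext j
            simp only [Finset.mem_filter, Finset.mem_univ, true_and,
              Finset.notMem_empty, iff_false]
            rintro ⟨m, hm, -⟩
            omega
          rw [hemp, Finset.card_empty, hJkl, Nat.add_zero, cnt_self]
        · have hDl : 0 < D ↑l := by
            have h5 := hle2 ↑l ↑k (by omega)
            rcases Nat.eq_zero_or_pos (D ↑l) with h6 | h6
            · rw [h6, Nat.zero_mul] at h5
              omega
            · exact h6
          have hMcard := cnt_card_range (PP J ↑k ↑l) (J ↑l ↑k) (D ↑k) ↑i
          have hbij : ((Finset.range (J ↑l ↑k)).filter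
                (fun m => (m + PP J ↑k ↑l) % D ↑k = ↑i)).card
              = (Finset.univ.filter (fun j : Fin (D ↑l) => CrossR N J ↑l ↑k ↑j ↑i)).card := by
            refine Finset.card_bij (fun m hm =>
              (⟨Nat.findGreatest (fun j' => SS N J ↑l ↑k j' ≤ m) (D ↑l), ?_⟩ : Fin (D ↑l)))
              ?_ ?_ ?_
            · have hm' := Finset.mem_filter.1 hm
              exact (hfib ↑l ↑k m hDl (Finset.mem_range.1 hm'.1)).1
            · intro m hm
              have hm' := Finset.mem_filter.1 hm
              have hmJ := Finset.mem_range.1 hm'.1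
              have hsp := hfib ↑l ↑k m hDl hmJ
              simp only [Finset.mem_filter, Finset.mem_univ, true_and]
              exact ⟨m, hmJ, hsp.2.1, hsp.2.2, hm'.2⟩
            · intro m hm m' hm' heq2
              have h1' := Finset.mem_filter.1 hm
              have h2' := Finset.mem_filter.1 hm'
              have hmJ := Finset.mem_range.1 h1'.1
              have hmJ' := Finset.mem_range.1 h2'.1
              have hsp := hfib ↑l ↑k m hDl hmJ
              have hsp' := hfib ↑l ↑k m' hDl hmJ'
              have hfgeq : Nat.findGreatest (fun j' => SS N J ↑l ↑k j' ≤ m) (D ↑l)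
                  = Nat.findGreatest (fun j' => SS N J ↑l ↑k j' ≤ m') (D ↑l) :=
                congrArg Fin.val heq2
              set fg := Nat.findGreatest (fun j' => SS N J ↑l ↑k j' ≤ m) (D ↑l) with hfgd
              rw [← hfgeq] at hsp'
              have hsize : cnt (PP J ↑l ↑k) (PP J ↑l ↑k + J ↑l ↑k) (D ↑l) fg ≤ D ↑k :=
                hfibsize ↑l ↑k fg (by omega) hsp.1 hDl
              have hSs := hSSsucc ↑l ↑k fg
              have hmod : (m + PP J ↑k ↑l) % D ↑k = (m' + PP J ↑k ↑l) % D ↑k := by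
                rw [h1'.2, h2'.2]
              rcases le_total m m' with hle | hle
              · have hdvd2 : D ↑k ∣ (m' + PP J ↑k ↑l) - (m + PP J ↑k ↑l) :=
                  (Nat.modEq_iff_dvd' (by omega)).1 hmod
                have e : (m' + PP J ↑k ↑l) - (m + PP J ↑k ↑l) = m' - m := by omega
                rw [e] at hdvd2
                have := Nat.eq_zero_of_dvd_of_lt hdvd2
                omega
              · have hdvd2 : D ↑k ∣ (m + PP J ↑k ↑l) - (m' + PP J ↑k ↑l) :=
                  (Nat.modEq_iff_dvd' (by omega)).1 hmod.symm
                have e : (m + PP J ↑k ↑l) - (m' + PP J ↑k ↑l) = m - m' := by omega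
                rw [e] at hdvd2
                have := Nat.eq_zero_of_dvd_of_lt hdvd2
                omega
            · intro j hj
              have hj' := (Finset.mem_filter.1 hj).2
              obtain ⟨m, hm1, hm2, hm3, hm4⟩ := hj'
              refine ⟨m, Finset.mem_filter.2 ⟨Finset.mem_range.2 hm1, hm4⟩, ?_⟩
              have hsp := hfib ↑l ↑k m hDl hm1
              refine Fin.ext ?_
              exact hfibu ↑l ↑k m _ ↑j hsp.1 j.isLt hsp.2.1 hsp.2.2 hm2 hm3
          rw [← hbij, hMcard]
          have e2 : J ↑l ↑k = J ↑k ↑l := hsym _ _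
          rw [e2]
      · -- l = k : internal edges
        have hlk : l = k := Fin.val_injective heq
        subst hlk
        rw [if_pos rfl, if_pos rfl, Nat.add_zero, cnt_self, Nat.zero_add]
        have hfilter : (Finset.univ.filter (fun j : Fin (D ↑l) => G0.Adj ⟨l, i⟩ ⟨l, j⟩))
            = Finset.univ.filter (fun j : Fin (D ↑l) => (GI ↑l).Adj i j) := by
          ext j
          simp only [Finset.mem_filter, Finset.mem_univ, true_and]
          exact hadj_cc l i j
        rw [hfilter, ← gdeg_eq_card_filter]
        exact hGI ↑l i
      · -- k < l : this vertex is on the "stair" side of the pair (k,l)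
        rw [if_neg (by omega), if_neg (by omega), Nat.add_zero]
        have hfilter : (Finset.univ.filter (fun j : Fin (D ↑l) => G0.Adj ⟨k, i⟩ ⟨l, j⟩))
            = Finset.univ.filter (fun j : Fin (D ↑l) => CrossR N J ↑k ↑l ↑i ↑j) := by
          ext j
          simp only [Finset.mem_filter, Finset.mem_univ, true_and]
          rw [hadj_cross k l hgt i j]
        rw [hfilter]
        rcases Nat.eq_zero_or_pos (J ↑k ↑l) with hJ0 | hJpos
        · have hemp : (Finset.univ.filter (fun j : Fin (D ↑l) => CrossR N J ↑k ↑l ↑i ↑j))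
              = ∅ := by
            ext j
            simp only [Finset.mem_filter, Finset.mem_univ, true_and,
              Finset.notMem_empty, iff_false]
            rintro ⟨m, hm, -⟩
            omega
          rw [hemp, Finset.card_empty, hJ0, Nat.add_zero, cnt_self]
        · have hDl : 0 < D ↑l := by
            have h5 := hle2 ↑k ↑l (by omega)
            rcases Nat.eq_zero_or_pos (D ↑l) with h6 | h6
            · rw [h6, Nat.mul_zero] at h5
              omega
            · exact h6
          have himg : (Finset.univ.filter (fun j : Fin (D ↑l) => CrossR N J ↑k ↑l ↑i ↑j))
              = (Finset.Ico (SS N J ↑k ↑l ↑i) (SS N J ↑k ↑l (↑i + 1))).image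
                  (fun m => (⟨(m + PP J ↑l ↑k) % D ↑l, Nat.mod_lt _ hDl⟩ : Fin (D ↑l))) := by
            ext j
            simp only [Finset.mem_filter, Finset.mem_univ, true_and, Finset.mem_image,
              Finset.mem_Ico]
            constructor
            · rintro ⟨m, hm1, hm2, hm3, hm4⟩
              exact ⟨m, ⟨hm2, hm3⟩, Fin.ext hm4⟩
            · rintro ⟨m, ⟨hm2, hm3⟩, hm4⟩
              have hmJ : m < J ↑k ↑l := by
                have h7 := hSSmono ↑k ↑l (↑i + 1) (D ↑k) i.isLt
                have h8 := hSSlast ↑k ↑l hDk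
                omega
              exact ⟨m, hmJ, hm2, hm3, congrArg Fin.val hm4⟩
          rw [himg]
          rw [Finset.card_image_of_injOn]
          · rw [Nat.card_Ico]
            have := hSSsucc ↑k ↑l ↑i
            omega
          · intro m hm m' hm' heq2
            simp only [Finset.mem_coe, Finset.mem_Ico] at hm hm'
            have hval : (m + PP J ↑l ↑k) % D ↑l = (m' + PP J ↑l ↑k) % D ↑l :=
              congrArg Fin.val heq2
            have hsize : cnt (PP J ↑k ↑l) (PP J ↑k ↑l + J ↑k ↑l) (D ↑k) ↑i ≤ D ↑l :=
              hfibsize ↑k ↑l ↑i (by omega) i.isLt hDk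
            have hSs := hSSsucc ↑k ↑l ↑i
            rcases le_total m m' with hle | hle
            · have hdvd2 : D ↑l ∣ (m' + PP J ↑l ↑k) - (m + PP J ↑l ↑k) :=
                (Nat.modEq_iff_dvd' (by omega)).1 hval
              have e : (m' + PP J ↑l ↑k) - (m + PP J ↑l ↑k) = m' - m := by omega
              rw [e] at hdvd2
              have := Nat.eq_zero_of_dvd_of_lt hdvd2
              omega
            · have hdvd2 : D ↑l ∣ (m + PP J ↑l ↑k) - (m' + PP J ↑l ↑k) :=
                (Nat.modEq_iff_dvd' (by omega)).1 hval.symm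
              have e : (m + PP J ↑l ↑k) - (m' + PP J ↑l ↑k) = m - m' := by omega
              rw [e] at hdvd2
              have := Nat.eq_zero_of_dvd_of_lt hdvd2
              omega
    rw [Finset.sum_congr rfl (fun l _ => hCl l), Finset.sum_add_distrib]
    have h2 : ∑ l : Fin N, (if (↑l : ℕ) = ↑k then dI N J ↑k ↑i else 0) = dI N J ↑k ↑i := by
      have e : ∀ l : Fin N, (if (↑l : ℕ) = ↑k then dI N J ↑k ↑i else 0)
          = (if l = k then dI N J ↑k ↑i else 0) := by
        intro l
        by_cases h : l = k
        · rw [if_pos (by rw [h]), if_pos h]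
        · rw [if_neg (fun hc => h (Fin.val_injective hc)), if_neg h]
      rw [Finset.sum_congr rfl (fun l _ => e l),
        Finset.sum_ite_eq' Finset.univ k (fun _ => dI N J ↑k ↑i),
        if_pos (Finset.mem_univ k)]
    have h1 : ∑ l : Fin N,
        cnt (PP J ↑k ↑l) (PP J ↑k ↑l + (if (↑l : ℕ) = ↑k then 0 else J ↑k ↑l)) (D ↑k) ↑i
        = cnt 0 (PP J ↑k N) (D ↑k) ↑i := by
      rw [Fin.sum_univ_eq_sum_range (fun l =>
        cnt (PP J ↑k l) (PP J ↑k l + (if l = ↑k then 0 else J ↑k l)) (D ↑k) ↑i) N]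
      have htel : ∀ M : ℕ,
          ∑ l ∈ Finset.range M, cnt (PP J ↑k l) (PP J ↑k (l + 1)) (D ↑k) ↑i
          = cnt 0 (PP J ↑k M) (D ↑k) ↑i := by
        intro M
        induction M with
        | zero =>
            rw [Finset.sum_range_zero, hPP0, cnt_self]
        | succ n ihn =>
            rw [Finset.sum_range_succ, ihn, cnt_append (Nat.zero_le _) (hPPmono ↑k n)]
      rw [Finset.sum_congr rfl (fun l _ => by rw [← hPPsucc ↑k l])]
      exact htel N
    rw [h1, h2]
    have hfin : cnt 0 (PP J ↑k N) (D ↑k) ↑i + dI N J ↑k ↑i = cnt 0 (↑k * D ↑k) (D ↑k) ↑i := by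
      have hle' : PP J ↑k N ≤ ↑k * D ↑k := by
        have := hPPN ↑k hk1 hkN
        omega
      exact cnt_append (Nat.zero_le _) hle' (D ↑k) ↑i
    rw [hfin]
    have := cnt_multiple hDk i.isLt 0 ↑k
    rwa [Nat.zero_add] at this
  -- general facts about vertices
  have hvpos : ∀ v : Vtx N J, 0 < (↑v.1 : ℕ) := by
    rintro ⟨vk, vi⟩
    show 0 < (↑vk : ℕ)
    by_contra h
    have h0 : (↑vk : ℕ) = 0 := by omega
    have h1 : (↑vi : ℕ) < Dof N J ↑vk := vi.isLt
    have h2 : Dof N J 0 = 0 := hD0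
    have h3 : Dof N J ↑vk = 0 := by rw [h0]; exact h2
    omega
  have hsig : ∀ (c : Fin N) (a b : Fin (D ↑c)), (⟨c, a⟩ : Vtx N J) = ⟨c, b⟩ → a = b := by
    intro c a b h
    cases h
    rfl
  -- the joint degree matrix of G0 is J
  have hjdm : ∀ k l, k ≤ l → jdm G0 k l = J k l := by
    intro k l hkl
    by_cases hk0 : k = 0
    · subst hk0
      rw [hzero l]
      have hemp : {e ∈ G0.edgeSet | Sym2.map (gdeg G0) e = s(0, l)} = ∅ := by
        ext e
        induction e using Sym2.ind with
        | _ x y =>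
          simp only [Set.mem_setOf_eq, Set.mem_empty_iff_false, iff_false, not_and]
          intro he hmap
          rw [Sym2.map_pair_eq, hdeg x, hdeg y, Sym2.eq_iff] at hmap
          have hx := hvpos x
          have hy := hvpos y
          rcases hmap with ⟨h1, h2⟩ | ⟨h1, h2⟩ <;> omega
      rw [jdm, hemp, Set.ncard_empty]
    by_cases hlN : N ≤ l
    · have hJ0 : J k l = 0 := by rw [hsym]; exact hsupp l k hlN
      rw [hJ0]
      have hemp : {e ∈ G0.edgeSet | Sym2.map (gdeg G0) e = s(k, l)} = ∅ := by
        ext e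
        induction e using Sym2.ind with
        | _ x y =>
          simp only [Set.mem_setOf_eq, Set.mem_empty_iff_false, iff_false, not_and]
          intro he hmap
          rw [Sym2.map_pair_eq, hdeg x, hdeg y, Sym2.eq_iff] at hmap
          have hx := x.1.isLt
          have hy := y.1.isLt
          rcases hmap with ⟨h1, h2⟩ | ⟨h1, h2⟩ <;> omega
      rw [jdm, hemp, Set.ncard_empty]
    push_neg at hlN
    have hk1 : 0 < k := Nat.pos_of_ne_zero hk0
    have hkN : k < N := by omega
    by_cases hkl2 : k = l
    · -- diagonal entries
      subst hkl2
      rcases Nat.eq_zero_or_pos (D k) with hDk | hDk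
      · rw [hJDzero k k hDk hkN]
        have hemp : {e ∈ G0.edgeSet | Sym2.map (gdeg G0) e = s(k, k)} = ∅ := by
          ext e
          induction e using Sym2.ind with
          | _ x y =>
            simp only [Set.mem_setOf_eq, Set.mem_empty_iff_false, iff_false, not_and]
            intro he hmap
            rw [Sym2.map_pair_eq, hdeg x, hdeg y, Sym2.eq_iff] at hmap
            have hx1 : (↑x.1 : ℕ) = k := by rcases hmap with ⟨h1, h2⟩ | ⟨h1, h2⟩ <;> omega
            have h1 : (↑x.2 : ℕ) < Dof N J ↑x.1 := x.2.isLt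
            have h3 : Dof N J ↑x.1 = 0 := by rw [hx1]; exact hDk
            omega
        rw [jdm, hemp, Set.ncard_empty]
      · set kF : Fin N := ⟨k, hkN⟩ with hkF
        have hset : {e ∈ G0.edgeSet | Sym2.map (gdeg G0) e = s(k, k)}
            = Sym2.map (fun j : Fin (D k) => (⟨kF, j⟩ : Vtx N J)) '' (GI k).edgeSet := by
          ext e
          induction e using Sym2.ind with
          | _ x y =>
            simp only [Set.mem_setOf_eq, Set.mem_image]
            constructor
            · rintro ⟨he, hmap⟩
              rw [SimpleGraph.mem_edgeSet] at he
              rw [Sym2.map_pair_eq, hdeg x, hdeg y, Sym2.eq_iff] at hmap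
              have hx1 : (↑x.1 : ℕ) = k := by
                rcases hmap with ⟨h1, h2⟩ | ⟨h1, h2⟩ <;> omega
              have hy1 : (↑y.1 : ℕ) = k := by
                rcases hmap with ⟨h1, h2⟩ | ⟨h1, h2⟩ <;> omega
              obtain ⟨xk, xi⟩ := x
              obtain ⟨yk, yi⟩ := y
              have hxkF : xk = kF := Fin.val_injective hx1
              have hykF : yk = kF := Fin.val_injective hy1
              subst hxkF
              subst hykF
              rw [hadj_cc kF xi yi] at he
              refine ⟨s(xi, yi), ?_, by rw [Sym2.map_pair_eq]⟩
              rw [SimpleGraph.mem_edgeSet]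
              exact he
            · rintro ⟨ep, hep, heq⟩
              induction ep using Sym2.ind with
              | _ a b =>
                rw [SimpleGraph.mem_edgeSet] at hep
                rw [Sym2.map_pair_eq] at heq
                rw [← heq]
                constructor
                · rw [SimpleGraph.mem_edgeSet]
                  exact (hadj_cc kF a b).2 hep
                · rw [Sym2.map_pair_eq, hdeg, hdeg]
        rw [jdm, hset, Set.ncard_image_of_injective _
          (Sym2.map.injective (fun a b h => hsig kF a b h))]
        have hsum2 : ∑ v : Fin (D k), gdeg (GI k) v = 2 * J k k := by
          rw [Finset.sum_congr rfl (fun v (_ : v ∈ Finset.univ) => hGI k v),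
            Fin.sum_univ_eq_sum_range (fun i => dI N J k i) (D k)]
          show ∑ i ∈ Finset.range (D k), cnt (PP J k N) (k * D k) (D k) i = 2 * J k k
          rw [cnt_sum hDk, Nat.card_Ico]
          have := hPPN k hk1 hkN
          omega
        have hhand := SimpleGraph.sum_degrees_eq_twice_card_edges (GI k)
        rw [Finset.sum_congr rfl (fun v (_ : v ∈ Finset.univ) =>
          (gdeg_eq_degree (GI k) v).symm), hsum2] at hhand
        rw [← SimpleGraph.coe_edgeFinset, Set.ncard_coe_finset]
        omega
    · -- off-diagonal entries
      have hklt : k < l := by omega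
      rcases Nat.eq_zero_or_pos (J k l) with hJ0 | hJpos
      · rw [hJ0]
        have hcontr : ∀ x y : Vtx N J, G0.Adj x y → (↑x.1 : ℕ) = k → (↑y.1 : ℕ) = l →
            False := by
          intro x y hxy hx1 hy1
          obtain ⟨xk, xi⟩ := x
          obtain ⟨yk, yi⟩ := y
          have hx1' : (↑xk : ℕ) = k := hx1
          have hy1' : (↑yk : ℕ) = l := hy1
          have h5 : (↑xk : ℕ) < ↑yk := by omega
          rw [hadj_cross xk yk h5 xi yi] at hxy
          obtain ⟨m, hm, -⟩ := hxy
          rw [hx1', hy1', hJ0] at hm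
          omega
        have hemp : {e ∈ G0.edgeSet | Sym2.map (gdeg G0) e = s(k, l)} = ∅ := by
          ext e
          induction e using Sym2.ind with
          | _ x y =>
            simp only [Set.mem_setOf_eq, Set.mem_empty_iff_false, iff_false, not_and]
            intro he hmap
            rw [SimpleGraph.mem_edgeSet] at he
            rw [Sym2.map_pair_eq, hdeg x, hdeg y, Sym2.eq_iff] at hmap
            rcases hmap with ⟨h1, h2⟩ | ⟨h1, h2⟩
            · exact hcontr x y he h1 h2
            · exact hcontr y x he.symm h2 h1
        rw [jdm, hemp, Set.ncard_empty]
      · have hDk : 0 < D k := by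
          have h6 : J k l ≤ ∑ l' ∈ Finset.range N, J k l' :=
            Finset.single_le_sum (f := fun l' => J k l') (fun _ _ => Nat.zero_le _)
              (Finset.mem_range.2 hlN)
          have h7 := hkey k hk1
          rcases Nat.eq_zero_or_pos (D k) with h8 | h8
          · rw [h8, Nat.mul_zero] at h7
            omega
          · exact h8
        have hDl : 0 < D l := by
          have h6 : J l k ≤ ∑ l' ∈ Finset.range N, J l l' :=
            Finset.single_le_sum (f := fun l' => J l l') (fun _ _ => Nat.zero_le _)
              (Finset.mem_range.2 hkN)
          have h7 := hkey l (by omega)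
          have h9 : J l k = J k l := hsym _ _
          rcases Nat.eq_zero_or_pos (D l) with h8 | h8
          · rw [h8, Nat.mul_zero] at h7
            omega
          · exact h8
        set kF : Fin N := ⟨k, hkN⟩ with hkF
        set lF : Fin N := ⟨l, hlN⟩ with hlF
        set stair : ℕ → Fin (D k) := fun m =>
          ⟨Nat.findGreatest (fun j => SS N J k l j ≤ m) (D k) % D k,
            Nat.mod_lt _ hDk⟩ with hstairdef
        set modv : ℕ → Fin (D l) := fun m =>
          ⟨(m + PP J l k) % D l, Nat.mod_lt _ hDl⟩ with hmodvdef
        set Φ : ℕ → Sym2 (Vtx N J) := fun m =>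
          s((⟨kF, stair m⟩ : Vtx N J), (⟨lF, modv m⟩ : Vtx N J)) with hΦdef
        have hstair : ∀ m, m < J k l →
            (↑(stair m) : ℕ) = Nat.findGreatest (fun j => SS N J k l j ≤ m) (D k) := by
          intro m hm
          exact Nat.mod_eq_of_lt (hfib k l m hDk hm).1
        have hΦadj : ∀ m, m < J k l → G0.Adj ⟨kF, stair m⟩ ⟨lF, modv m⟩ := by
          intro m hm
          rw [hadj_cross kF lF hklt]
          obtain ⟨hfg, hs1, hs2⟩ := hfib k l m hDk hm
          refine ⟨m, hm, ?_, ?_, rfl⟩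
          · rw [hstair m hm]
            exact hs1
          · rw [hstair m hm]
            exact hs2
        have hmain : ∀ x y : Vtx N J, G0.Adj x y → (↑x.1 : ℕ) = k → (↑y.1 : ℕ) = l →
            ∃ m, m < J k l ∧ Φ m = s(x, y) := by
          intro x y hxy hx1 hy1
          obtain ⟨xk, xi⟩ := x
          obtain ⟨yk, yi⟩ := y
          have hxkF : xk = kF := Fin.val_injective hx1
          have hykF : yk = lF := Fin.val_injective hy1
          subst hxkF
          subst hykF
          rw [hadj_cross kF lF hklt xi yi] at hxy
          obtain ⟨m, hm1, hm2, hm3, hm4⟩ := hxy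
          refine ⟨m, hm1, ?_⟩
          have hsp := hfib k l m hDk hm1
          have hst : stair m = xi := by
            refine Fin.ext ?_
            rw [hstair m hm1]
            exact hfibu k l m _ ↑xi hsp.1 xi.isLt hsp.2.1 hsp.2.2 hm2 hm3
          have hmv : modv m = yi := Fin.ext hm4
          rw [hΦdef]
          simp only []
          rw [hst, hmv]
        have hset : {e ∈ G0.edgeSet | Sym2.map (gdeg G0) e = s(k, l)}
            = Φ '' ↑(Finset.range (J k l)) := by
          ext e
          induction e using Sym2.ind with
          | _ x y =>
            simp only [Set.mem_setOf_eq, Set.mem_image, Finset.coe_range, Set.mem_Iio]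
            constructor
            · rintro ⟨he, hmap⟩
              rw [SimpleGraph.mem_edgeSet] at he
              rw [Sym2.map_pair_eq, hdeg x, hdeg y, Sym2.eq_iff] at hmap
              rcases hmap with ⟨h1, h2⟩ | ⟨h1, h2⟩
              · obtain ⟨m, hm, hΦ⟩ := hmain x y he h1 h2
                exact ⟨m, hm, hΦ⟩
              · obtain ⟨m, hm, hΦ⟩ := hmain y x he.symm h2 h1
                exact ⟨m, hm, by rw [hΦ, Sym2.eq_swap]⟩
            · rintro ⟨m, hm, heqΦ⟩
              rw [← heqΦ]
              constructor
              · exact (SimpleGraph.mem_edgeSet G0).2 (hΦadj m hm)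
              · show Sym2.map (gdeg G0) (Φ m) = s(k, l)
                rw [hΦdef]
                simp only []
                rw [Sym2.map_pair_eq, hdeg, hdeg]
        rw [jdm, hset]
        have hinj : Set.InjOn Φ ↑(Finset.range (J k l)) := by
          intro m hm m' hm' heq2
          simp only [Finset.coe_range, Set.mem_Iio] at hm hm'
          have heq3 : ((⟨kF, stair m⟩ : Vtx N J) = ⟨kF, stair m'⟩ ∧
              (⟨lF, modv m⟩ : Vtx N J) = ⟨lF, modv m'⟩) ∨
              ((⟨kF, stair m⟩ : Vtx N J) = ⟨lF, modv m'⟩ ∧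
              (⟨lF, modv m⟩ : Vtx N J) = ⟨kF, stair m'⟩) := by
            rw [hΦdef] at heq2
            simp only [] at heq2
            exact Sym2.eq_iff.1 heq2
          rcases heq3 with ⟨h1, h2⟩ | ⟨h1, h2⟩
          · have hst : stair m = stair m' := hsig kF _ _ h1
            have hmv : modv m = modv m' := hsig lF _ _ h2
            have hfg : Nat.findGreatest (fun j => SS N J k l j ≤ m) (D k)
                = Nat.findGreatest (fun j => SS N J k l j ≤ m') (D k) := by
              have := congrArg Fin.val hst
              rw [hstair m hm, hstair m' hm'] at this
              exact this
            have hsp := hfib k l m hDk hm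
            have hsp' := hfib k l m' hDk hm'
            rw [← hfg] at hsp'
            have hsize : cnt (PP J k l) (PP J k l + J k l) (D k)
                (Nat.findGreatest (fun j => SS N J k l j ≤ m) (D k)) ≤ D l :=
              hfibsize k l _ (by omega) hsp.1 hDk
            have hSs := hSSsucc k l (Nat.findGreatest (fun j => SS N J k l j ≤ m) (D k))
            have hval : (m + PP J l k) % D l = (m' + PP J l k) % D l :=
              congrArg Fin.val hmv
            rcases le_total m m' with hle | hle
            · have hdvd2 : D l ∣ (m' + PP J l k) - (m + PP J l k) :=
                (Nat.modEq_iff_dvd' (by omega)).1 hval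
              have e : (m' + PP J l k) - (m + PP J l k) = m' - m := by omega
              rw [e] at hdvd2
              have := Nat.eq_zero_of_dvd_of_lt hdvd2
              omega
            · have hdvd2 : D l ∣ (m + PP J l k) - (m' + PP J l k) :=
                (Nat.modEq_iff_dvd' (by omega)).1 hval.symm
              have e : (m + PP J l k) - (m' + PP J l k) = m - m' := by omega
              rw [e] at hdvd2
              have := Nat.eq_zero_of_dvd_of_lt hdvd2
              omega
          · exfalso
            have := congrArg (fun v : Vtx N J => (↑v.1 : ℕ)) h1
            simp only [] at this
            simp only [hkF, hlF] at this
            omega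
        rw [Set.ncard_image_of_injOn hinj, Set.ncard_coe_finset, Finset.card_range]
  -- transfer to Fin n
  set n := Fintype.card (Vtx N J) with hn
  set eqv : Vtx N J ≃ Fin n := Fintype.equivFin (Vtx N J) with heqv
  set G1 : SimpleGraph (Fin n) := SimpleGraph.comap (⇑eqv.symm) G0 with hG1
  have hdeg1 : ∀ x : Fin n, gdeg G1 x = gdeg G0 (eqv.symm x) := by
    intro x
    rw [gdeg, gdeg]
    have hnb : G1.neighborSet x = ⇑eqv.symm ⁻¹' (G0.neighborSet (eqv.symm x)) := by
      ext y
      simp [hG1, SimpleGraph.comap_adj]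
    rw [hnb, ← Equiv.image_eq_preimage_symm,
      Set.ncard_image_of_injective _ eqv.injective]
  have hjdm1 : ∀ k l, jdm G1 k l = jdm G0 k l := by
    intro k l
    rw [jdm, jdm]
    have hset2 : {e ∈ G1.edgeSet | Sym2.map (gdeg G1) e = s(k, l)}
        = Sym2.map ⇑eqv '' {e ∈ G0.edgeSet | Sym2.map (gdeg G0) e = s(k, l)} := by
      ext e
      induction e using Sym2.ind with
      | _ x y =>
        simp only [Set.mem_setOf_eq, Set.mem_image]
        constructor
        · rintro ⟨he, hmap⟩
          refine ⟨s(eqv.symm x, eqv.symm y), ⟨?_, ?_⟩, ?_⟩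
          · rw [SimpleGraph.mem_edgeSet] at he ⊢
            exact he
          · rw [Sym2.map_pair_eq] at hmap ⊢
            rw [hdeg1 x, hdeg1 y] at hmap
            exact hmap
          · rw [Sym2.map_pair_eq, Equiv.apply_symm_apply, Equiv.apply_symm_apply]
        · rintro ⟨ep, ⟨hep1, hep2⟩, heq⟩
          induction ep using Sym2.ind with
          | _ a b =>
            rw [Sym2.map_pair_eq] at heq
            rw [← heq]
            constructor
            · rw [SimpleGraph.mem_edgeSet, hG1, SimpleGraph.comap_adj,
                Equiv.symm_apply_apply, Equiv.symm_apply_apply]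
              rwa [SimpleGraph.mem_edgeSet] at hep1
            · rw [Sym2.map_pair_eq, hdeg1, hdeg1,
                Equiv.symm_apply_apply, Equiv.symm_apply_apply]
              rw [Sym2.map_pair_eq] at hep2
              exact hep2
    rw [hset2, Set.ncard_image_of_injective _ (Sym2.map.injective eqv.injective)]
  exact ⟨n, G1, fun k l hkl => (hjdm1 k l).trans (hjdm k l hkl)⟩

end Suf


/-- A (symmetric, finitely supported, positive-degree indexed) joint degree matrix `J`
is realizable as a simple graph iff (1) `k` divides `J_{k,k} + Σ_l J_{k,l}` for every
`k > 0` (so `D_k` is a nonnegative integer), (2) `J_{k,l} ≤ D_k·D_l` for `k ≠ l`, and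
(3) `J_{k,k} ≤ C(D_k, 2)` for every `k`. -/
theorem stmt4 (N : ℕ) (J : ℕ → ℕ → ℕ)
    (hsym : ∀ k l, J k l = J l k)
    (hzero : ∀ l, J 0 l = 0)
    (hsupp : ∀ k l, N ≤ k → J k l = 0) :
    (∃ (n : ℕ) (G : SimpleGraph (Fin n)), ∀ k l, k ≤ l → jdm G k l = J k l) ↔
      ((∀ k, 0 < k → k ∣ (J k k + ∑ l ∈ Finset.range N, J k l)) ∧
       (∀ k l, k ≠ l → J k l ≤ Dof N J k * Dof N J l) ∧
       (∀ k, J k k ≤ (Dof N J k).choose 2)) := by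
  constructor
  · rintro ⟨n, G, hJ⟩
    exact necessity G N J hsym hzero hsupp hJ
  · rintro ⟨h1, h2, h3⟩
    exact sufficiency N J hsym hzero hsupp h1 h2 h3
end

section
/- If a joint degree matrix J satisfies the graphicality conditions (D_k integral for all k; J_{k,l} ≤ D_k·D_l for k ≠ l; J_{k,k} ≤ C(D_k,2)), then the associated degree sequence, consisting of D_k copies of each degree k sorted in non-increasing order, satisfies the Erdős–Gallai condition. -/
open Finset

lemma sum_map_eq_sum_count (N : ℕ) (f : ℕ → ℕ) :
    ∀ (e : List ℕ), (∀ x ∈ e, x < N) →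
      (e.map f).sum = ∑ c ∈ Finset.range N, f c * e.count c := by
  intro e
  induction e with
  | nil => simp
  | cons a e ih =>
    intro h
    have ha : a < N := h a (by simp)
    rw [List.map_cons, List.sum_cons, ih (fun x hx => h x (by simp [hx]))]
    have hc : ∀ c ∈ Finset.range N, f c * (a :: e).count c
        = f c * e.count c + (if c = a then f a else 0) := by
      intro c _
      rw [List.count_cons]
      rcases eq_or_ne c a with rfl | hne
      · simp [mul_add]
      · simp [hne, Ne.symm hne]
    rw [Finset.sum_congr rfl hc, Finset.sum_add_distrib,
      Finset.sum_ite_eq' (Finset.range N) a (fun _ => f a)]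
    simp [ha, add_comm]

lemma two_mul_choose_two (n : ℕ) : 2 * n.choose 2 = n * (n - 1) := by
  rcases n with _ | m
  · simp
  · have h2 : 2 ∣ (m+1)*m := by
      have : Even ((m+1)*m) := by simpa [Nat.mul_comm] using Nat.even_mul_succ_self m
      exact this.two_dvd
    rw [Nat.choose_two_right]
    simp only [Nat.add_sub_cancel]
    exact Nat.mul_div_cancel' h2

lemma b1aux (a s Jcc R : ℕ) (h1 : 2*Jcc ≤ a*(a-1)) (h2 : R ≤ a*(s-a)) (ha : a ≤ s) :
    2*Jcc + R ≤ a*(s-1) := by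
  rcases Nat.eq_zero_or_pos a with rfl | ha1
  · simp at h1 h2; omega
  · calc 2*Jcc + R ≤ a*(a-1) + a*(s-a) := add_le_add h1 h2
    _ = a*((a-1)+(s-a)) := by rw [mul_add]
    _ ≤ a*(s-1) := Nat.mul_le_mul_left a (by omega)

lemma sq_id (s m k : ℕ) (hk : k = s + m) (hk1 : 1 ≤ k) :
    s*(s-1) + m*(k-1+s) = k*(k-1) := by
  rcases Nat.eq_zero_or_pos s with rfl | hs
  · simp [hk]
  · subst hk
    zify [show 1 ≤ s by omega, show 1 ≤ s + m by omega]
    ring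

lemma arith1Z (s m t D X : ℤ) (hs : 0 ≤ s) (hm : 0 ≤ m) (ht : 0 ≤ t) (hX0 : 0 ≤ X)
    (hmD : m = 0 ∨ m + 1 ≤ D) (htk : t ≤ s + m) (hX1 : X ≤ s * D) (hX2 : X ≤ t * D) :
    X + t * m ≤ m * (2*s + m - 1) + (D - m) * t := by
  rcases eq_or_lt_of_le hm with hm0 | hm1
  · rw [← hm0]
    simp only [mul_zero, zero_mul, add_zero, zero_add, sub_zero]
    nlinarith [hX2]
  have hmD' : m + 1 ≤ D := by rcases hmD with h | h <;> omega
  rcases le_or_gt (2*t) (2*s + m - 1) with hc | hc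
  · nlinarith [mul_le_mul_of_nonneg_left hc hm]
  · have hts : s + 1 ≤ t := by omega
    rcases le_or_gt (2*m) D with hc2 | hc2
    · have p1 : (0:ℤ) ≤ (D - 2*m) * (t - s) :=
        mul_nonneg (by omega) (by omega)
      have p2 : (0:ℤ) ≤ m * (m - 1) := mul_nonneg hm (by omega)
      nlinarith [p1, p2]
    · rcases eq_or_lt_of_le htk with hq | hq
      · have p1 : (0:ℤ) ≤ m * (D - m - 1) := mul_nonneg hm (by omega)
        nlinarith [p1]
      · have p1 : (0:ℤ) ≤ (m - (D - m)) * (s + m - t - 1) :=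
          mul_nonneg (by omega) (by omega)
        have p2 : (0:ℤ) ≤ (D - m) * (m - 1) := mul_nonneg (by omega) (by omega)
        nlinarith [p1, p2]

lemma arith2Z (s m t D X Jtt Zg Zl P : ℤ) (hs : 0 ≤ s) (hm1 : 1 ≤ m)
    (hmD : m ≤ D) (hX0 : 0 ≤ X) (hZl : 0 ≤ Zl) (hP : 0 ≤ P)
    (hX : X ≤ s * D) (hJ : 2*Jtt ≤ D*(D-1)) (hZg : Zg ≤ D*P)
    (htD : t * D = 2*Jtt + X + Zg + Zl) :
    X + t * m ≤ m * (2*s + m - 1) + (s + m) * (D - m) + m * P + Zl := by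
  have hD1 : 1 ≤ D := le_trans hm1 hmD
  have key : D * (X + t * m) ≤ D * (m * (2*s + m - 1) + (s + m) * (D - m) + m * P + Zl) := by
    nlinarith [mul_le_mul_of_nonneg_left hX (by omega : (0:ℤ) ≤ D + m),
      mul_le_mul_of_nonneg_left hJ (by omega : (0:ℤ) ≤ m),
      mul_le_mul_of_nonneg_left hZg (by omega : (0:ℤ) ≤ m),
      mul_nonneg hZl (by omega : (0:ℤ) ≤ D - m)]
  exact le_of_mul_le_mul_left key (by omega)

lemma range_split (N t : ℕ) (htN : t < N) (g : ℕ → ℕ) :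
    ∑ c ∈ Finset.range N, g c
      = (∑ c ∈ (Finset.range N).filter (fun c => t < c), g c) + g t
        + ∑ c ∈ (Finset.range N).filter (fun c => c < t), g c := by
  rw [← Finset.sum_filter_add_sum_filter_not (Finset.range N) (fun c => t < c)]
  have he : (Finset.range N).filter (fun c => ¬ t < c)
      = insert t ((Finset.range N).filter (fun c => c < t)) := by
    ext c
    simp only [Finset.mem_filter, Finset.mem_insert, Finset.mem_range, not_lt]
    constructor
    · rintro ⟨h1, h2⟩; omega
    · rintro (rfl | ⟨h1, h2⟩) <;> omega
  rw [he, Finset.sum_insert (by simp), ← add_assoc]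

lemma sum_map_one (l : List ℕ) : (l.map (fun _ => 1)).sum = l.length := by
  induction l <;> simp [*] <;> omega


set_option maxHeartbeats 1000000 in
/-- If a joint degree matrix `J` satisfies the graphicality conditions
(`D_k` integral for all `k`; `J_{k,l} ≤ D_k·D_l` for `k ≠ l`; `J_{k,k} ≤ C(D_k,2)`),
then the associated degree sequence (each degree `k > 0` listed with multiplicity
`D_k`, sorted in non-increasing order) satisfies the Erdős–Gallai condition. -/
theorem stmt5 (N : ℕ) (J : ℕ → ℕ → ℕ)
    (hsym : ∀ k l, J k l = J l k)
    (hzero : ∀ l, J 0 l = 0)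
    (hsupp : ∀ k l, N ≤ k → J k l = 0)
    (hint : ∀ k, 0 < k → k ∣ (J k k + ∑ l ∈ Finset.range N, J k l))
    (h2 : ∀ k l, k ≠ l → J k l ≤ Dof N J k * Dof N J l)
    (h3 : ∀ k, J k k ≤ (Dof N J k).choose 2)
    (d : List ℕ) (hsort : d.Pairwise (· ≥ ·))
    (hcount : ∀ k, 0 < k → d.count k = Dof N J k)
    (hnz : d.count 0 = 0) :
    ∀ k ≤ d.length,
      (d.take k).sum ≤ k * (k - 1) + ((d.drop k).map (fun x => min x k)).sum := by
  intro k hk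
  rcases Nat.eq_zero_or_pos k with rfl | hk1
  · simp
  set D := Dof N J with hD
  have hcnt : ∀ c, d.count c = D c := by
    intro c
    rcases Nat.eq_zero_or_pos c with rfl | hc
    · rw [hnz, hD]; unfold Dof; simp
    · exact hcount c hc
  have hDlarge : ∀ c, N ≤ c → D c = 0 := by
    intro c hc
    rw [hD]; unfold Dof
    rw [hsupp c c hc, Finset.sum_congr rfl (fun l _ => hsupp c l hc)]
    simp
  have hmemd : ∀ x ∈ d, 0 < x ∧ x < N := by
    intro x hx
    have hpos : 0 < d.count x := List.count_pos_iff.mpr hx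
    constructor
    · rcases Nat.eq_zero_or_pos x with rfl | h
      · rw [hnz] at hpos; omega
      · exact h
    · by_contra h
      rw [hcnt x, hDlarge x (by omega)] at hpos; omega
  have hn1 : 0 < d.length := lt_of_lt_of_le hk1 hk
  have hN0 : 0 < N := by
    obtain ⟨x, hx⟩ := List.exists_mem_of_length_pos hn1
    exact lt_of_le_of_lt (Nat.zero_le x) (hmemd x hx).2
  set t := d.getD k 0 with htdef
  have ht_take : ∀ x ∈ d.take k, t ≤ x := by
    rcases lt_or_eq_of_le hk with hklt | hkeq
    · intro x hx
      rw [List.mem_iff_getElem] at hx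
      obtain ⟨i, hi, rfl⟩ := hx
      rw [List.getElem_take, htdef, List.getD_eq_getElem d 0 hklt]
      exact List.pairwise_iff_getElem.mp hsort i k
        (by simp [List.length_take] at hi; omega) hklt
        (by simp [List.length_take] at hi; omega)
    · intro x _
      rw [htdef, List.getD_eq_default d 0 (le_of_eq hkeq.symm)]
      exact Nat.zero_le x
  have ht_drop : ∀ x ∈ d.drop k, x ≤ t := by
    intro x hx
    rw [List.mem_iff_getElem] at hx
    obtain ⟨i, hi, rfl⟩ := hx
    have hklt : k < d.length := by
      simp [List.length_drop] at hi; omega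
    rw [List.getElem_drop, htdef, List.getD_eq_getElem d 0 hklt]
    rcases Nat.eq_zero_or_pos i with rfl | hi1
    · simp
    · exact List.pairwise_iff_getElem.mp hsort k (k+i)
        (by simp [List.length_drop] at hi; omega) (by simp [List.length_drop] at hi; omega)
        (by omega)
  have htN : t < N := by
    rcases lt_or_eq_of_le hk with hklt | hkeq
    · rw [htdef, List.getD_eq_getElem d 0 hklt]
      exact (hmemd _ (List.getElem_mem hklt)).2
    · rw [htdef, List.getD_eq_default d 0 (le_of_eq hkeq.symm)]
      exact hN0
  set m := (d.take k).count t with hmdef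
  have hsplitc : ∀ c, (d.take k).count c + (d.drop k).count c = D c := by
    intro c
    rw [← hcnt c]
    conv_rhs => rw [← List.take_append_drop k d]
    rw [List.count_append]
  have hc_take_lt : ∀ c, c < t → (d.take k).count c = 0 := by
    intro c hc
    rw [List.count_eq_zero]
    intro hmem
    exact absurd (ht_take c hmem) (by omega)
  have hc_drop_gt : ∀ c, t < c → (d.drop k).count c = 0 := by
    intro c hc
    rw [List.count_eq_zero]
    intro hmem
    exact absurd (ht_drop c hmem) (by omega)
  have hmD : m ≤ D t := by have := hsplitc t; omega
  have hmlt : m = 0 ∨ m + 1 ≤ D t := by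
    rcases lt_or_eq_of_le hk with hklt | hkeq
    · right
      have htd : t ∈ d.drop k := by
        rw [htdef, List.getD_eq_getElem d 0 hklt, List.mem_iff_getElem]
        refine ⟨0, by simp [List.length_drop]; omega, ?_⟩
        rw [List.getElem_drop]
        simp
      have h1 : 0 < (d.drop k).count t := List.count_pos_iff.mpr htd
      have := hsplitc t; omega
    · left
      have ht0 : t = 0 := by rw [htdef, List.getD_eq_default d 0 (le_of_eq hkeq.symm)]
      rw [hmdef, ht0]
      have := (d.take_sublist k).count_le 0
      omega
  have hmem_take : ∀ x ∈ d.take k, x < N := fun x hx =>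
    (hmemd x (List.mem_of_mem_take hx)).2
  have hmem_drop : ∀ x ∈ d.drop k, x < N := fun x hx =>
    (hmemd x (List.mem_of_mem_drop hx)).2
  set F := (Finset.range N).filter (fun c => t < c) with hF
  set L := (Finset.range N).filter (fun c => c < t) with hL
  set s := ∑ c ∈ F, D c with hs
  have hcount_take : ∀ c ∈ F, (d.take k).count c = D c := by
    intro c hcF
    have h1 : t < c := (Finset.mem_filter.mp hcF).2
    have h2 := hsplitc c
    have h3 := hc_drop_gt c h1
    omega
  have hlen_take : (d.take k).length = k := by rw [List.length_take]; omega
  have hks : k = s + m := by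
    have h1 : ((d.take k).map (fun _ => 1)).sum
        = ∑ c ∈ Finset.range N, 1 * (d.take k).count c :=
      sum_map_eq_sum_count N _ _ hmem_take
    rw [sum_map_one, hlen_take, range_split N t htN] at h1
    have e1 : ∑ c ∈ F, 1 * (d.take k).count c = s :=
      Finset.sum_congr rfl (fun c hc => by rw [one_mul, hcount_take c hc])
    have e2 : ∑ c ∈ L, 1 * (d.take k).count c = 0 :=
      Finset.sum_eq_zero (fun c hc => by
        rw [one_mul, hc_take_lt c (Finset.mem_filter.mp hc).2])
    rw [e1, e2, one_mul] at h1
    omega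
  have hsum_take : (d.take k).sum = (∑ c ∈ F, c * D c) + t * m := by
    have h1 : (d.take k).sum = ∑ c ∈ Finset.range N, c * (d.take k).count c := by
      have := sum_map_eq_sum_count N id _ hmem_take
      simpa using this
    rw [h1, range_split N t htN]
    have e1 : ∑ c ∈ F, c * (d.take k).count c = ∑ c ∈ F, c * D c :=
      Finset.sum_congr rfl (fun c hc => by rw [hcount_take c hc])
    have e2 : ∑ c ∈ L, c * (d.take k).count c = 0 :=
      Finset.sum_eq_zero (fun c hc => by
        rw [hc_take_lt c (Finset.mem_filter.mp hc).2, mul_zero])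
    rw [e1, e2, add_zero]
  have hsum_drop : ((d.drop k).map (fun x => min x k)).sum
      = min t k * (D t - m) + ∑ c ∈ L, min c k * D c := by
    rw [sum_map_eq_sum_count N _ _ hmem_drop, range_split N t htN]
    have e1 : ∑ c ∈ F, min c k * (d.drop k).count c = 0 :=
      Finset.sum_eq_zero (fun c hc => by
        rw [hc_drop_gt c (Finset.mem_filter.mp hc).2, mul_zero])
    have e2 : (d.drop k).count t = D t - m := by have := hsplitc t; omega
    have e3 : ∑ c ∈ L, min c k * (d.drop k).count c = ∑ c ∈ L, min c k * D c :=
      Finset.sum_congr rfl (fun c hc => by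
        have h1 := hsplitc c
        have h4 := hc_take_lt c (Finset.mem_filter.mp hc).2
        have : (d.drop k).count c = D c := by omega
        rw [this])
    rw [e1, e2, e3, zero_add]
  rw [hsum_take, hsum_drop]
  have hcD : ∀ c, 0 < c → c * D c = J c c + ∑ l ∈ Finset.range N, J c l := by
    intro c hc
    rw [hD]; unfold Dof
    rw [mul_comm]
    exact Nat.div_mul_cancel (hint c hc)
  set X := ∑ c ∈ F, J c t with hX
  set E := ∑ c ∈ F, (J c c + ∑ l ∈ F, J c l) with hE
  set Y := ∑ l ∈ L, ∑ c ∈ F, J c l with hY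
  have hFsum : ∑ c ∈ F, c * D c = E + X + Y := by
    have h1 : ∀ c ∈ F, c * D c = (J c c + ∑ l ∈ F, J c l) + J c t + ∑ l ∈ L, J c l := by
      intro c hc
      have hc0 : 0 < c := by
        have := (Finset.mem_filter.mp hc).2; omega
      rw [hcD c hc0, range_split N t htN (fun l => J c l)]
      ring
    rw [Finset.sum_congr rfl h1, Finset.sum_add_distrib, Finset.sum_add_distrib, hY,
      Finset.sum_comm]
  have hDc_le_s : ∀ c ∈ F, D c ≤ s :=
    fun c hc => Finset.single_le_sum (fun i _ => Nat.zero_le _) hc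
  have hB1 : E ≤ s * (s - 1) := by
    have h1 : ∀ c ∈ F, J c c + ∑ l ∈ F, J c l ≤ D c * (s - 1) := by
      intro c hc
      have hR : ∑ l ∈ F.erase c, J c l ≤ D c * (s - D c) := by
        have hsub : ∑ l ∈ F.erase c, D l = s - D c := by
          have := Finset.add_sum_erase F D hc
          omega
        calc ∑ l ∈ F.erase c, J c l ≤ ∑ l ∈ F.erase c, D c * D l :=
              Finset.sum_le_sum (fun l hl => h2 c l (Ne.symm (Finset.ne_of_mem_erase hl)))
          _ = D c * ∑ l ∈ F.erase c, D l := by rw [Finset.mul_sum]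
          _ = D c * (s - D c) := by rw [hsub]
      have hJc : 2 * J c c ≤ D c * (D c - 1) := by
        rw [← two_mul_choose_two]
        exact Nat.mul_le_mul_left 2 (h3 c)
      have hb := b1aux (D c) s (J c c) _ hJc hR (hDc_le_s c hc)
      have he : J c c + ∑ l ∈ F.erase c, J c l = ∑ l ∈ F, J c l :=
        Finset.add_sum_erase F (fun l => J c l) hc
      omega
    calc E ≤ ∑ c ∈ F, D c * (s-1) := Finset.sum_le_sum h1
      _ = s * (s-1) := by rw [← Finset.sum_mul]
  have hXs : X ≤ s * D t := by
    calc X ≤ ∑ c ∈ F, D c * D t :=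
        Finset.sum_le_sum (fun c hc => h2 c t (by
          have := (Finset.mem_filter.mp hc).2; omega))
      _ = s * D t := by rw [← Finset.sum_mul]
  have hrow : ∀ l, ∑ c ∈ F, J c l ≤ l * D l := by
    intro l
    rcases Nat.eq_zero_or_pos l with rfl | hl
    · have : ∀ c ∈ F, J c 0 = 0 := fun c _ => by rw [hsym, hzero]
      rw [Finset.sum_eq_zero this]
      exact Nat.zero_le _
    · calc ∑ c ∈ F, J c l = ∑ c ∈ F, J l c :=
          Finset.sum_congr rfl (fun c _ => hsym c l)
        _ ≤ ∑ c ∈ Finset.range N, J l c :=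
          Finset.sum_le_sum_of_subset (Finset.filter_subset _ _)
        _ ≤ J l l + ∑ c ∈ Finset.range N, J l c := Nat.le_add_left _ _
        _ = l * D l := (hcD l hl).symm
  have hcol : ∀ l, l < t → ∑ c ∈ F, J c l ≤ s * D l := by
    intro l hl
    calc ∑ c ∈ F, J c l ≤ ∑ c ∈ F, D c * D l :=
        Finset.sum_le_sum (fun c hc => h2 c l (by
          have := (Finset.mem_filter.mp hc).2; omega))
      _ = s * D l := by rw [← Finset.sum_mul]
  have hYb : ∀ l ∈ L, ∑ c ∈ F, J c l ≤ min l k * D l := by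
    intro l hlL
    have hlt : l < t := (Finset.mem_filter.mp hlL).2
    rcases le_total l k with h | h
    · rw [min_eq_left h]; exact hrow l
    · rw [min_eq_right h]
      calc ∑ c ∈ F, J c l ≤ s * D l := hcol l hlt
        _ ≤ k * D l := Nat.mul_le_mul_right _ (by omega)
  rw [hFsum]
  have hkz : (k:ℤ) = (s:ℤ) + m := by exact_mod_cast hks
  have hsq := sq_id s m k hks hk1
  rcases le_or_gt t k with htk | htk
  · -- case t ≤ k
    rw [min_eq_left htk]
    have hYB : Y ≤ ∑ c ∈ L, min c k * D c := Finset.sum_le_sum hYb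
    have harith : X + t * m ≤ m * (k - 1 + s) + (D t - m) * t := by
      have hz := arith1Z s m t (D t) X (Int.natCast_nonneg s) (Int.natCast_nonneg m)
        (Int.natCast_nonneg t) (Int.natCast_nonneg X)
        (by rcases hmlt with h | h
            · left; exact_mod_cast h
            · right; exact_mod_cast h)
        (by rw [← hkz]; exact_mod_cast htk)
        (by exact_mod_cast hXs) (by exact_mod_cast hrow t)
      zify [hmD, hk1]
      nlinarith [hz, hkz]
    have hcm : t * (D t - m) = (D t - m) * t := mul_comm _ _
    linarith [hB1, hYB, harith]
  · -- case k < t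
    rw [min_eq_right (le_of_lt htk)]
    rcases Nat.eq_zero_or_pos m with hm0 | hm1
    · -- m = 0
      have hsk : s = k := by omega
      have hYB : Y ≤ ∑ c ∈ L, min c k * D c := Finset.sum_le_sum hYb
      have hXk : X ≤ k * (D t - m) := by
        calc X ≤ s * D t := hXs
          _ = k * (D t - m) := by rw [hsk, hm0, Nat.sub_zero]
      have hEk : E ≤ k * (k-1) := by rw [hsk] at hB1; exact hB1
      have htm : t * m = 0 := by rw [hm0, mul_zero]
      linarith [hEk, hXk, hYB]
    · -- m ≥ 1
      have hmlt' : m + 1 ≤ D t := by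
        rcases hmlt with h | h
        · omega
        · exact h
      have ht0 : 0 < t := by omega
      set L1 := L.filter (fun l => l < k) with hL1
      set L2 := L.filter (fun l => ¬ l < k) with hL2
      have hYsplit : (∑ l ∈ L1, ∑ c ∈ F, J c l) + (∑ l ∈ L2, ∑ c ∈ F, J c l) = Y :=
        Finset.sum_filter_add_sum_filter_not L _ _
      have hMsplit : (∑ l ∈ L1, min l k * D l) + (∑ l ∈ L2, min l k * D l)
          = ∑ c ∈ L, min c k * D c :=
        Finset.sum_filter_add_sum_filter_not L _ _
      set P := ∑ l ∈ L2, D l with hP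
      set Zg := ∑ l ∈ L2, J t l with hZg
      set Zl := ∑ l ∈ L1, J t l with hZl
      have htD : t * D t = 2 * J t t + X + Zg + Zl := by
        rw [hcD t ht0, range_split N t htN (fun l => J t l), ← hF, ← hL]
        have e1 : ∑ c ∈ F, J t c = X := Finset.sum_congr rfl (fun c _ => hsym t c)
        have e2 : Zl + Zg = ∑ l ∈ L, J t l := Finset.sum_filter_add_sum_filter_not L _ _
        omega
      have hZgb : Zg ≤ D t * P := by
        calc Zg ≤ ∑ l ∈ L2, D t * D l :=
            Finset.sum_le_sum (fun l hl => h2 t l (by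
              have : l < t := (Finset.mem_filter.mp ((Finset.filter_subset _ _) hl)).2
              omega))
          _ = D t * P := by rw [Finset.mul_sum]
      have hB2a : (∑ l ∈ L2, ∑ c ∈ F, J c l) + m * P ≤ ∑ l ∈ L2, min l k * D l := by
        rw [hP, Finset.mul_sum, ← Finset.sum_add_distrib]
        refine Finset.sum_le_sum (fun l hl => ?_)
        have hl2 := Finset.mem_filter.mp hl
        have hlt : l < t := (Finset.mem_filter.mp hl2.1).2
        have hlk : k ≤ l := by omega
        rw [min_eq_right hlk]
        calc (∑ c ∈ F, J c l) + m * D l ≤ s * D l + m * D l :=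
            add_le_add_left (hcol l hlt) _
          _ = k * D l := by rw [hks, add_mul]
      have hB2b : (∑ l ∈ L1, ∑ c ∈ F, J c l) + Zl ≤ ∑ l ∈ L1, min l k * D l := by
        rw [hZl, ← Finset.sum_add_distrib]
        refine Finset.sum_le_sum (fun l hl => ?_)
        have hl2 := Finset.mem_filter.mp hl
        have hlt : l < t := (Finset.mem_filter.mp hl2.1).2
        have hlk : l < k := hl2.2
        rw [min_eq_left (by omega)]
        rcases Nat.eq_zero_or_pos l with rfl | hl1
        · have e1 : ∑ c ∈ F, J c 0 = 0 :=
            Finset.sum_eq_zero (fun c _ => by rw [hsym, hzero])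
          rw [e1, hsym, hzero]
          simp
        · have htF : t ∉ F := by
            intro hmem
            exact absurd (Finset.mem_filter.mp hmem).2 (lt_irrefl t)
          have e0 : (∑ c ∈ F, J c l) = ∑ c ∈ F, J l c :=
            Finset.sum_congr rfl (fun c _ => hsym c l)
          have e1 : (∑ c ∈ F, J l c) + J l t = ∑ c ∈ insert t F, J l c := by
            rw [Finset.sum_insert htF, add_comm]
          have e2 : ∑ c ∈ insert t F, J l c ≤ ∑ c ∈ Finset.range N, J l c := by
            refine Finset.sum_le_sum_of_subset ?_
            intro x hx
            rcases Finset.mem_insert.mp hx with rfl | hx2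
            · exact Finset.mem_range.mpr htN
            · exact (Finset.filter_subset _ _) hx2
          have e4 : ∑ c ∈ Finset.range N, J l c ≤ l * D l := by
            rw [hcD l hl1]
            exact Nat.le_add_left _ _
          rw [e0, hsym t l, e1]
          exact le_trans e2 e4
      have harith : X + t * m ≤ m * (k - 1 + s) + k * (D t - m) + m * P + Zl := by
        have hz := arith2Z s m t (D t) X (J t t) Zg Zl P (Int.natCast_nonneg s)
          (by exact_mod_cast hm1) (by exact_mod_cast hmD) (Int.natCast_nonneg X)
          (Int.natCast_nonneg Zl) (Int.natCast_nonneg P)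
          (by exact_mod_cast hXs)
          (by
            have hn : 2 * J t t ≤ D t * (D t - 1) := by
              rw [← two_mul_choose_two]
              exact Nat.mul_le_mul_left 2 (h3 t)
            have h1 : (1:ℕ) ≤ D t := by omega
            zify [h1] at hn
            exact hn)
          (by exact_mod_cast hZgb)
          (by exact_mod_cast htD)
        zify [hmD, hk1]
        nlinarith [hz, hkz]
      linarith [hB1, hB2a, hB2b, harith, hsq, hYsplit, hMsplit]
end

section
/- The state space of the pseudograph Markov chain A is connected: any two pseudographs with the same joint degree matrix J (arising from perfect matchings in the JDM configuration model) can be transformed into one another by a finite sequence of endpoint swaps, each swap exchanging the vertex-assignments of two endpoints within a single degree neighborhood. -/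
private lemma step13 {ι : Type*} [DecidableEq ι] (s : ι → ℕ)
    (a : ∀ i, Equiv.Perm (Fin (s i))) (i : ι) (p : Equiv.Perm (Fin (s i))) :
    Relation.ReflTransGen
      (fun a b => ∃ (i : ι) (t : Equiv.Perm (Fin (s i))),
        t.IsSwap ∧ b = Function.update a i (t * a i)) a (Function.update a i (p * a i)) := by
  refine Equiv.Perm.swap_induction_on p ?_ ?_
  · simpa using Relation.ReflTransGen.refl
  · intro f u v huv ih
    refine ih.tail ⟨i, Equiv.swap u v, ⟨u, v, huv, rfl⟩, ?_⟩
    rw [Function.update_self, Function.update_idem, mul_assoc]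


/-- Connectivity of the state space of the pseudograph chain `A`: states are families
of perfect matchings, one within each complete bipartite degree neighborhood (the
`i`-th neighborhood having `s i` mini-vertices and `s i` mini-endpoints, so its
perfect matchings are permutations of `Fin (s i)`). An endpoint swap acts on a single
neighborhood `i` by composing its matching with a transposition. Any two states are
connected by a finite sequence of endpoint swaps. -/
theorem stmt13 {ι : Type*} [Fintype ι] [DecidableEq ι] (s : ι → ℕ)
    (x y : ∀ i, Equiv.Perm (Fin (s i))) :
    Relation.ReflTransGen
      (fun a b => ∃ (i : ι) (t : Equiv.Perm (Fin (s i))),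
        t.IsSwap ∧ b = Function.update a i (t * a i)) x y := by
  have key : ∀ S : Finset ι, Relation.ReflTransGen
      (fun a b => ∃ (i : ι) (t : Equiv.Perm (Fin (s i))),
        t.IsSwap ∧ b = Function.update a i (t * a i)) x
      (fun i => if i ∈ S then y i else x i) := by
    intro S
    induction S using Finset.induction_on with
    | empty => exact Relation.ReflTransGen.refl
    | @insert j S hj ih =>
      have hz : (fun i => if i ∈ insert j S then y i else x i) =
          Function.update (fun i => if i ∈ S then y i else x i) j
            ((y j * (if j ∈ S then y j else x j)⁻¹) * (fun i => if i ∈ S then y i else x i) j) := by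
        funext i
        by_cases h : i = j
        · subst h; simp [hj, mul_assoc]
        · simp [Function.update_of_ne h, h]
      rw [hz]
      exact ih.trans (step13 s _ j _)
  have := key Finset.univ
  simpa using this
end

section
/- Let d_1 ≥ d_2 ≥ ... ≥ d_n be a graphical degree sequence realized by simple graphs G1 and G2 on the same labeled vertex set. Then G1 can be transformed into G2 by a finite sequence of 2-switches (replacing edges (a,b),(c,d) by (a,d),(c,b) when the new pairs are non-edges and distinct), with every intermediate graph simple and realizing the same degree sequence. -/
/-- A 2-switch: remove edges `(a,b)` and `(c,d)` and add `(a,d)` and `(c,b)`,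
assuming `a ≠ d`, `c ≠ b` and neither new pair is already an edge. This preserves
all vertex degrees and simplicity. -/
def twoSwitch {V : Type*} (G H : SimpleGraph V) : Prop :=
  ∃ a b c d : V, G.Adj a b ∧ G.Adj c d ∧
    a ≠ d ∧ c ≠ b ∧ ¬ G.Adj a d ∧ ¬ G.Adj c b ∧
    H = SimpleGraph.fromEdgeSet
      ((G.edgeSet \ {s(a, b), s(c, d)}) ∪ {s(a, d), s(c, b)})


set_option linter.unusedSectionVars false
set_option linter.unusedVariables false
set_option maxHeartbeats 1000000

namespace TaylorAux

open SimpleGraph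

variable {V : Type*} [Fintype V]

noncomputable def meas (G H : SimpleGraph V) : ℕ :=
  ((G.edgeSet \ H.edgeSet) ∪ (H.edgeSet \ G.edgeSet)).ncard

lemma meas_comm (G H : SimpleGraph V) : meas G H = meas H G := by
  unfold meas; rw [Set.union_comm]

lemma mem_sw {α : Type*} (s : Set α) (p q r t e : α) :
    e ∈ (s \ {p, q}) ∪ {r, t} ↔ (e ∈ s ∧ e ≠ p ∧ e ≠ q) ∨ e = r ∨ e = t := by
  simp only [Set.mem_union, Set.mem_diff, Set.mem_insert_iff, Set.mem_singleton_iff]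
  tauto

lemma switch_edgeSet (G : SimpleGraph V) (a b c d : V)
    (hab : G.Adj a b) (hcd : G.Adj c d) (had : a ≠ d) (hcb : c ≠ b) :
    (SimpleGraph.fromEdgeSet
      ((G.edgeSet \ {s(a, b), s(c, d)}) ∪ {s(a, d), s(c, b)})).edgeSet
    = (G.edgeSet \ {s(a, b), s(c, d)}) ∪ {s(a, d), s(c, b)} := by
  rw [SimpleGraph.edgeSet_fromEdgeSet]
  apply Set.eq_of_subset_of_subset Set.diff_subset
  intro e he
  refine ⟨he, ?_⟩
  show ¬ e.IsDiag
  rcases he with ⟨he1, -⟩ | he1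
  · exact G.not_isDiag_of_mem_edgeSet he1
  · simp only [Set.mem_insert_iff, Set.mem_singleton_iff] at he1
    rcases he1 with rfl | rfl
    · exact fun h => had (Sym2.mk_isDiag_iff.mp h)
    · exact fun h => hcb (Sym2.mk_isDiag_iff.mp h)

section SwitchData

variable {G : SimpleGraph V} {a b c d : V}
  (hab : G.Adj a b) (hcd : G.Adj c d) (had : a ≠ d) (hcb : c ≠ b)
  (hnad : ¬ G.Adj a d) (hncb : ¬ G.Adj c b)

include hab hcd had hcb hnad hncb

lemma sw_ne : a ≠ b ∧ c ≠ d ∧ a ≠ c ∧ b ≠ d := by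
  refine ⟨hab.ne, hcd.ne, ?_, ?_⟩
  · rintro rfl; exact hnad hcd
  · rintro rfl; exact hncb hcd

lemma sw_sym2_ne : s(a,b) ≠ s(c,d) ∧ s(a,b) ≠ s(a,d) ∧ s(a,b) ≠ s(c,b) ∧
    s(c,d) ≠ s(a,d) ∧ s(c,d) ≠ s(c,b) ∧ s(a,d) ≠ s(c,b) := by
  obtain ⟨h1, h2, h3, h4⟩ := sw_ne hab hcd had hcb hnad hncb
  refine ⟨?_, ?_, ?_, ?_, ?_, ?_⟩ <;>
    (intro h; rw [Sym2.eq_iff] at h; rcases h with ⟨e1, e2⟩ | ⟨e1, e2⟩) <;>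
    first
      | exact h1 e1 | exact h1 e2 | exact h2 e1 | exact h2 e2
      | exact h3 e1 | exact h3 e2 | exact h4 e1 | exact h4 e2
      | exact had e1 | exact had e2 | exact hcb e1 | exact hcb e2
      | exact h1 e1.symm | exact h2 e1.symm | exact h3 e1.symm | exact h4 e1.symm
      | exact had e1.symm | exact hcb e1.symm
      | exact h1 e2.symm | exact h2 e2.symm | exact h3 e2.symm | exact h4 e2.symm
      | exact had e2.symm | exact hcb e2.symm

lemma twoSwitch_symm' :
    twoSwitch (SimpleGraph.fromEdgeSet
      ((G.edgeSet \ {s(a, b), s(c, d)}) ∪ {s(a, d), s(c, b)})) G := by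
  obtain ⟨hne1, hne2, hne3, hne4⟩ := sw_ne hab hcd had hcb hnad hncb
  obtain ⟨n1, n2, n3, n4, n5, n6⟩ := sw_sym2_ne hab hcd had hcb hnad hncb
  have hES := switch_edgeSet G a b c d hab hcd had hcb
  set H' := SimpleGraph.fromEdgeSet
      ((G.edgeSet \ {s(a, b), s(c, d)}) ∪ {s(a, d), s(c, b)}) with hH'
  have hmem : ∀ e, e ∈ H'.edgeSet ↔
      (e ∈ G.edgeSet ∧ e ≠ s(a,b) ∧ e ≠ s(c,d)) ∨ e = s(a,d) ∨ e = s(c,b) := by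
    intro e; rw [hES, mem_sw]
  have habE : s(a,b) ∈ G.edgeSet := hab
  have hcdE : s(c,d) ∈ G.edgeSet := hcd
  have hnadE : s(a,d) ∉ G.edgeSet := hnad
  have hncbE : s(c,b) ∉ G.edgeSet := hncb
  refine ⟨a, d, c, b, ?_, ?_, hne1, hne2, ?_, ?_, ?_⟩
  · rw [← SimpleGraph.mem_edgeSet, hmem]; tauto
  · rw [← SimpleGraph.mem_edgeSet, hmem]; tauto
  · rw [← SimpleGraph.mem_edgeSet, hmem]
    intro h
    rcases h with ⟨-, h, -⟩ | h | h
    · exact h rfl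
    · exact n2 h
    · exact n3 h
  · rw [← SimpleGraph.mem_edgeSet, hmem]
    intro h
    rcases h with ⟨-, -, h⟩ | h | h
    · exact h rfl
    · exact n4 h
    · exact n5 h
  · conv_lhs => rw [← SimpleGraph.fromEdgeSet_edgeSet G]
    congr 1
    ext e
    rw [mem_sw]
    simp only [hmem e]
    constructor
    · intro heG
      by_cases h1 : e = s(a,b)
      · tauto
      by_cases h2 : e = s(c,d)
      · tauto
      have h3 : e ≠ s(a,d) := by rintro rfl; exact hnadE heG
      have h4 : e ≠ s(c,b) := by rintro rfl; exact hncbE heG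
      tauto
    · rintro (⟨(⟨heG, -, -⟩ | rfl | rfl), hne1', hne2'⟩ | rfl | rfl)
      · exact heG
      · exact absurd rfl hne1'
      · exact absurd rfl hne2'
      · exact habE
      · exact hcdE
lemma sw_adj (v w : V) :
    (SimpleGraph.fromEdgeSet
      ((G.edgeSet \ {s(a, b), s(c, d)}) ∪ {s(a, d), s(c, b)})).Adj v w ↔
    ((G.Adj v w ∧ s(v,w) ≠ s(a,b) ∧ s(v,w) ≠ s(c,d)) ∨ s(v,w) = s(a,d) ∨ s(v,w) = s(c,b)) := by
  rw [SimpleGraph.fromEdgeSet_adj]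
  simp only [Set.mem_union, Set.mem_diff, Set.mem_insert_iff, Set.mem_singleton_iff,
    SimpleGraph.mem_edgeSet]
  constructor
  · rintro ⟨(⟨h1, h2⟩ | h), -⟩
    · exact Or.inl ⟨h1, by tauto⟩
    · exact Or.inr h
  · rintro (⟨h1, h2, h3⟩ | h | h)
    · exact ⟨Or.inl ⟨h1, by tauto⟩, h1.ne⟩
    · refine ⟨Or.inr (Or.inl h), ?_⟩
      rw [Sym2.eq_iff] at h
      rcases h with ⟨h1, h2⟩ | ⟨h1, h2⟩
      · rw [h1, h2]; exact had
      · rw [h1, h2]; exact had.symm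
    · refine ⟨Or.inr (Or.inr h), ?_⟩
      rw [Sym2.eq_iff] at h
      rcases h with ⟨h1, h2⟩ | ⟨h1, h2⟩
      · rw [h1, h2]; exact hcb
      · rw [h1, h2]; exact hcb.symm

lemma sw_nb_a :
    (SimpleGraph.fromEdgeSet
      ((G.edgeSet \ {s(a, b), s(c, d)}) ∪ {s(a, d), s(c, b)})).neighborSet a
    = insert d (G.neighborSet a \ {b}) := by
  have hne1 : a ≠ b := hab.ne
  have hne3 : a ≠ c := by rintro rfl; exact hnad hcd
  ext w
  simp only [SimpleGraph.mem_neighborSet, sw_adj hab hcd had hcb hnad hncb,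
    Set.mem_insert_iff, Set.mem_diff, Set.mem_singleton_iff]
  constructor
  · rintro (⟨h1, h2, h3⟩ | h | h)
    · exact Or.inr ⟨h1, fun hw => h2 (by rw [hw])⟩
    · rcases Sym2.eq_iff.mp h with ⟨-, h2⟩ | ⟨h1, -⟩
      · exact Or.inl h2
      · exact absurd h1 had
    · rcases Sym2.eq_iff.mp h with ⟨h1, -⟩ | ⟨h1, -⟩
      · exact absurd h1 hne3
      · exact absurd h1 hne1
  · rintro (rfl | ⟨h1, h2⟩)
    · exact Or.inr (Or.inl rfl)
    · refine Or.inl ⟨h1, ?_, ?_⟩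
      · intro h
        rcases Sym2.eq_iff.mp h with ⟨-, h'⟩ | ⟨h', -⟩
        · exact h2 h'
        · exact hne1 h'
      · intro h
        rcases Sym2.eq_iff.mp h with ⟨h', -⟩ | ⟨h', -⟩
        · exact hne3 h'
        · exact had h'

lemma sw_nb_other (v : V) (hva : v ≠ a) (hvb : v ≠ b) (hvc : v ≠ c) (hvd : v ≠ d) :
    (SimpleGraph.fromEdgeSet
      ((G.edgeSet \ {s(a, b), s(c, d)}) ∪ {s(a, d), s(c, b)})).neighborSet v
    = G.neighborSet v := by
  ext w
  simp only [SimpleGraph.mem_neighborSet, sw_adj hab hcd had hcb hnad hncb]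
  constructor
  · rintro (⟨h1, -, -⟩ | h | h)
    · exact h1
    · rcases Sym2.eq_iff.mp h with ⟨h', -⟩ | ⟨h', -⟩
      · exact absurd h' hva
      · exact absurd h' hvd
    · rcases Sym2.eq_iff.mp h with ⟨h', -⟩ | ⟨h', -⟩
      · exact absurd h' hvc
      · exact absurd h' hvb
  · intro h
    refine Or.inl ⟨h, ?_, ?_⟩
    · intro h'
      rcases Sym2.eq_iff.mp h' with ⟨h'', -⟩ | ⟨h'', -⟩
      · exact hva h''
      · exact hvb h''
    · intro h'
      rcases Sym2.eq_iff.mp h' with ⟨h'', -⟩ | ⟨h'', -⟩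
      · exact hvc h''
      · exact hvd h''

lemma sw_set_perm :
    ((G.edgeSet \ {s(a, b), s(c, d)}) ∪ {s(a, d), s(c, b)})
      = ((G.edgeSet \ {s(b, a), s(d, c)}) ∪ {s(b, c), s(d, a)})
    ∧ ((G.edgeSet \ {s(a, b), s(c, d)}) ∪ {s(a, d), s(c, b)})
      = ((G.edgeSet \ {s(c, d), s(a, b)}) ∪ {s(c, b), s(a, d)})
    ∧ ((G.edgeSet \ {s(a, b), s(c, d)}) ∪ {s(a, d), s(c, b)})
      = ((G.edgeSet \ {s(d, c), s(b, a)}) ∪ {s(d, a), s(b, c)}) := by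
  rw [show s(b,a) = s(a,b) from Sym2.eq_swap, show s(d,c) = s(c,d) from Sym2.eq_swap,
    show s(b,c) = s(c,b) from Sym2.eq_swap, show s(d,a) = s(a,d) from Sym2.eq_swap,
    Set.pair_comm s(c,d) s(a,b), Set.pair_comm s(c,b) s(a,d)]
  exact ⟨by rw [Set.pair_comm s(a,d) s(c,b)], by rw [Set.pair_comm s(a,b) s(c,d)],
    by rw [Set.pair_comm s(a,b) s(c,d), Set.pair_comm s(a,d) s(c,b)]⟩

lemma gdeg_switch (v : V) :
    gdeg (SimpleGraph.fromEdgeSet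
      ((G.edgeSet \ {s(a, b), s(c, d)}) ∪ {s(a, d), s(c, b)})) v = gdeg G v := by
  have hne1 : a ≠ b := hab.ne
  have hne2 : c ≠ d := hcd.ne
  have hne3 : a ≠ c := by rintro rfl; exact hnad hcd
  have hne4 : b ≠ d := by rintro rfl; exact hncb hcd
  have key : ∀ (x y z : V), z ∈ G.neighborSet x → y ∉ G.neighborSet x → y ≠ z →
      (insert y (G.neighborSet x \ {z})).ncard = (G.neighborSet x).ncard := by
    intro x y z hz hy hyz
    rw [Set.ncard_insert_of_notMem (by simp [hy]) ((G.neighborSet x).toFinite.diff),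
      Set.ncard_diff_singleton_of_mem hz]
    have : 0 < (G.neighborSet x).ncard :=
      Set.ncard_pos ((G.neighborSet x).toFinite) |>.mpr ⟨z, hz⟩
    omega
  obtain ⟨hp1, hp2, hp3⟩ := sw_set_perm hab hcd had hcb hnad hncb
  unfold gdeg
  by_cases hva : v = a
  · rw [hva, sw_nb_a hab hcd had hcb hnad hncb]
    exact key a d b hab hnad (Ne.symm hne4)
  by_cases hvb : v = b
  · rw [hvb, hp1, sw_nb_a hab.symm hcd.symm (Ne.symm hcb) (Ne.symm had)
      (fun h => hncb h.symm) (fun h => hnad h.symm)]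
    exact key b c a hab.symm (fun h => hncb h.symm) hne3.symm
  by_cases hvc : v = c
  · rw [hvc, hp2, sw_nb_a hcd hab hcb had hncb hnad]
    exact key c b d hcd hncb hne4
  by_cases hvd : v = d
  · rw [hvd, hp3, sw_nb_a hcd.symm hab.symm (Ne.symm had) (Ne.symm hcb)
      (fun h => hnad h.symm) (fun h => hncb h.symm)]
    exact key d a c hcd.symm (fun h => hnad h.symm) hne3
  · rw [sw_nb_other hab hcd had hcb hnad hncb v hva hvb hvc hvd]

end SwitchData

lemma ncard_lt_of_subset_diff {α : Type*} {D D' : Set α} {e1 e2 e3 y : α}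
    (hD : D.Finite) (h1 : e1 ∈ D) (h2 : e2 ∈ D) (h3 : e3 ∈ D)
    (h12 : e1 ≠ e2) (h13 : e1 ≠ e3) (h23 : e2 ≠ e3)
    (hsub : D' ⊆ (D \ {e1, e2, e3}) ∪ {y}) : D'.ncard < D.ncard := by
  have hT : ({e1, e2, e3} : Set α) ⊆ D := by
    intro x hx
    rcases hx with rfl | rfl | rfl
    exacts [h1, h2, h3]
  have hTcard : ({e1, e2, e3} : Set α).ncard = 3 := by
    rw [Set.ncard_insert_of_notMem (by simp [h12, h13]) (Set.toFinite _),
      Set.ncard_pair h23]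
  have h3le : 3 ≤ D.ncard := hTcard ▸ Set.ncard_le_ncard hT hD
  have hdiff : (D \ {e1, e2, e3}).ncard = D.ncard - 3 := by
    rw [Set.ncard_diff hT (Set.toFinite _), hTcard]
  have hle : D'.ncard ≤ (D \ {e1, e2, e3}).ncard + 1 := by
    calc D'.ncard ≤ ((D \ {e1, e2, e3}) ∪ {y}).ncard :=
          Set.ncard_le_ncard hsub (hD.diff.union (Set.finite_singleton y))
    _ ≤ _ := by rw [Set.union_singleton]; exact Set.ncard_insert_le y _
  omega


/-- A "good configuration" on `G` (relative to `H`): performing the 2-switch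
removing `ab`, `cd` and adding `ad`, `cb` strictly decreases the symmetric
difference with `H`. -/
def good (G H : SimpleGraph V) (a b c d : V) : Prop :=
  G.Adj a b ∧ G.Adj c d ∧ a ≠ d ∧ c ≠ b ∧ ¬G.Adj a d ∧ ¬G.Adj c b ∧
    ¬H.Adj a b ∧ H.Adj c b ∧ (¬H.Adj c d ∨ H.Adj a d)

lemma balance (G H : SimpleGraph V) (hdeg : ∀ v, (G.neighborSet v).ncard = (H.neighborSet v).ncard)
    (v : V) : {u | G.Adj v u ∧ ¬H.Adj v u}.ncard = {u | H.Adj v u ∧ ¬G.Adj v u}.ncard := by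
  have h1 : G.neighborSet v = {u | G.Adj v u ∧ ¬H.Adj v u} ∪ {u | G.Adj v u ∧ H.Adj v u} := by
    ext u; simp only [SimpleGraph.mem_neighborSet, Set.mem_union, Set.mem_setOf_eq]; tauto
  have h2 : H.neighborSet v = {u | H.Adj v u ∧ ¬G.Adj v u} ∪ {u | G.Adj v u ∧ H.Adj v u} := by
    ext u; simp only [SimpleGraph.mem_neighborSet, Set.mem_union, Set.mem_setOf_eq]; tauto
  have d1 : Disjoint {u | G.Adj v u ∧ ¬H.Adj v u} {u | G.Adj v u ∧ H.Adj v u} := by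
    rw [Set.disjoint_left]; rintro u ⟨-, h⟩ ⟨-, h'⟩; exact h h'
  have d2 : Disjoint {u | H.Adj v u ∧ ¬G.Adj v u} {u | G.Adj v u ∧ H.Adj v u} := by
    rw [Set.disjoint_left]; rintro u ⟨-, h⟩ ⟨h', -⟩; exact h h'
  have e1 := Set.ncard_union_eq d1 (Set.toFinite _) (Set.toFinite _)
  have e2 := Set.ncard_union_eq d2 (Set.toFinite _) (Set.toFinite _)
  have := hdeg v
  rw [h1, e1, h2, e2] at this
  omega

lemma exists_good (G H : SimpleGraph V)
    (hdeg : ∀ v, (G.neighborSet v).ncard = (H.neighborSet v).ncard)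
    (hne : G ≠ H) :
    (∃ a b c d, good G H a b c d) ∨ (∃ a b c d, good H G a b c d) := by
  by_contra hcon
  push_neg at hcon
  obtain ⟨hng, hnh⟩ := hcon
  -- failure consequences
  have F1 : ∀ a b c d : V, G.Adj a b → ¬H.Adj a b → H.Adj c b → ¬G.Adj c b →
      G.Adj c d → ¬H.Adj c d → d ≠ a → G.Adj a d := by
    intro a b c d h1 h2 h3 h4 h5 h6 h7
    by_contra hn
    exact hng a b c d ⟨h1, h5, h7.symm, h3.ne, hn, h4, h2, h3, Or.inl h6⟩
  have F2s : ∀ a b c e : V, H.Adj a b → ¬G.Adj a b → G.Adj c b → ¬H.Adj c b →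
      G.Adj a e → ¬H.Adj a e → ¬H.Adj c e := by
    intro a b c e h1 h2 h3 h4 h5 h6
    by_contra hn
    exact hnh a b c e ⟨h1, hn, h5.ne, h3.ne, h6, h4, h2, h3, Or.inr h5⟩
  -- R-neighborhoods and B-neighborhoods
  set Rn : V → Set V := fun v => {u | G.Adj v u ∧ ¬H.Adj v u} with hRn
  set Bn : V → Set V := fun v => {u | H.Adj v u ∧ ¬G.Adj v u} with hBn
  have hbal : ∀ v, (Rn v).ncard = (Bn v).ncard := balance G H hdeg
  -- some R-edge exists
  have hRne : ∃ u w, G.Adj u w ∧ ¬H.Adj u w := by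
    have : ∃ u w, (G.Adj u w ∧ ¬H.Adj u w) ∨ (H.Adj u w ∧ ¬G.Adj u w) := by
      by_contra hc
      push_neg at hc
      apply hne
      ext u w
      exact ⟨(hc u w).1, (hc u w).2⟩
    obtain ⟨u, w, h | h⟩ := this
    · exact ⟨u, w, h⟩
    · have : w ∈ Bn u := h
      have hpos : 0 < (Rn u).ncard := by
        rw [hbal u]
        exact (Set.ncard_pos (Set.toFinite _)).mpr ⟨w, this⟩
      obtain ⟨x, hx⟩ := (Set.ncard_pos (Set.toFinite _)).mp hpos
      exact ⟨u, x, hx⟩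
  obtain ⟨u0, w0, hu0⟩ := hRne
  -- choose c with maximal R-degree
  obtain ⟨c, -, hmax⟩ := Finset.exists_max_image Finset.univ (fun v => (Rn v).ncard)
    ⟨u0, Finset.mem_univ u0⟩
  have hmax' : ∀ v, (Rn v).ncard ≤ (Rn c).ncard := fun v => hmax v (Finset.mem_univ v)
  have hmpos : 0 < (Rn c).ncard :=
    lt_of_lt_of_le ((Set.ncard_pos (Set.toFinite _)).mpr ⟨w0, hu0⟩) (hmax' u0)
  -- pick b ∈ Bn c
  obtain ⟨b, hbB⟩ := (Set.ncard_pos (Set.toFinite _)).mp (by rw [← hbal c]; exact hmpos)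
  have hHcb : H.Adj c b := hbB.1
  have hnGcb : ¬G.Adj c b := hbB.2
  -- pick a ∈ Rn b
  have hcBb : c ∈ Bn b := ⟨hHcb.symm, fun h => hnGcb h.symm⟩
  obtain ⟨a, haR⟩ := (Set.ncard_pos (Set.toFinite _)).mp
    (by rw [hbal b]; exact (Set.ncard_pos (Set.toFinite _)).mpr ⟨c, hcBb⟩)
  have hGba : G.Adj b a := haR.1
  have hnHba : ¬H.Adj b a := haR.2
  -- key step : every d ∈ Rn c other than a is an R-neighbor of a
  have key : ∀ d, d ∈ Rn c → d ≠ a → d ∈ Rn a := by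
    rintro d ⟨hGcd, hnHcd⟩ hda
    have h1 : G.Adj a d := F1 a b c d hGba.symm (fun h => hnHba h.symm) hHcb hnGcb hGcd hnHcd hda
    have h2 : ¬H.Adj a d := by
      have := F2s b c d a hHcb.symm (fun h => hnGcb h.symm) hGcd.symm
        (fun h => hnHcd h.symm) hGba hnHba
      exact fun h => this h.symm
    exact ⟨h1, h2⟩
  have hbRa : b ∈ Rn a := ⟨hGba.symm, fun h => hnHba h.symm⟩
  have hbnotRc : b ∉ Rn c := fun h => hnGcb h.1
  have hsub : insert b (Rn c \ {a}) ⊆ Rn a := by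
    rintro x (rfl | ⟨hx1, hx2⟩)
    · exact hbRa
    · exact key x hx1 hx2
  have hfin : (Rn c \ {a}).Finite := Set.toFinite _
  have hb_not : b ∉ Rn c \ {a} := fun h => hbnotRc h.1
  by_cases haRc : a ∈ Rn c
  · -- then also c ∈ Rn a, contradiction with maximality
    have hcRa : c ∈ Rn a := ⟨haRc.1.symm, fun h => haRc.2 h.symm⟩
    have hcnot : c ∉ insert b (Rn c \ {a}) := by
      rintro (rfl | ⟨⟨h, -⟩, -⟩)
      · exact hHcb.ne rfl
      · exact G.irrefl h
    have hsub2 : insert c (insert b (Rn c \ {a})) ⊆ Rn a := by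
      rintro x (rfl | hx)
      · exact hcRa
      · exact hsub hx
    have hcard : (insert c (insert b (Rn c \ {a}))).ncard = (Rn c).ncard + 1 := by
      rw [Set.ncard_insert_of_notMem hcnot (hfin.insert b),
        Set.ncard_insert_of_notMem hb_not hfin,
        Set.ncard_diff_singleton_of_mem haRc]
      omega
    have := Set.ncard_le_ncard hsub2 (Set.toFinite _)
    rw [hcard] at this
    have := hmax' a
    omega
  · have heq : Rn c \ {a} = Rn c := by
      apply Set.diff_singleton_eq_self haRc
    have hcard : (insert b (Rn c \ {a})).ncard = (Rn c).ncard + 1 := by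
      rw [Set.ncard_insert_of_notMem hb_not hfin, heq]
    have := Set.ncard_le_ncard hsub (Set.toFinite _)
    rw [hcard] at this
    have := hmax' a
    omega


section Meas
variable {G H : SimpleGraph V} {a b c d : V}
  (hab : G.Adj a b) (hcd : G.Adj c d) (had : a ≠ d) (hcb : c ≠ b)
  (hnad : ¬ G.Adj a d) (hncb : ¬ G.Adj c b)
  (hnab : ¬ H.Adj a b) (hHcb : H.Adj c b) (hX : ¬ H.Adj c d ∨ H.Adj a d)

include hab hcd had hcb hnad hncb hnab hHcb hX

lemma meas_lt :
    meas (SimpleGraph.fromEdgeSet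
      ((G.edgeSet \ {s(a, b), s(c, d)}) ∪ {s(a, d), s(c, b)})) H < meas G H := by
  obtain ⟨n1, n2, n3, n4, n5, n6⟩ := sw_sym2_ne hab hcd had hcb hnad hncb
  have hES := switch_edgeSet G a b c d hab hcd had hcb
  have hE' : ∀ f : Sym2 V, f ∈ (SimpleGraph.fromEdgeSet
      ((G.edgeSet \ {s(a, b), s(c, d)}) ∪ {s(a, d), s(c, b)})).edgeSet ↔
      (f ∈ G.edgeSet ∧ f ≠ s(a,b) ∧ f ≠ s(c,d)) ∨ f = s(a,d) ∨ f = s(c,b) := by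
    intro f; rw [hES, mem_sw]
  have habG : s(a,b) ∈ G.edgeSet := hab
  have hcdG : s(c,d) ∈ G.edgeSet := hcd
  have hnadG : s(a,d) ∉ G.edgeSet := hnad
  have hncbG : s(c,b) ∉ G.edgeSet := hncb
  have hnabH : s(a,b) ∉ H.edgeSet := hnab
  have hcbH : s(c,b) ∈ H.edgeSet := hHcb
  unfold meas
  rcases hX with hX | hX
  · -- type A : cd ∉ H ; removed triple {ab, cd, cb}, possibly added ad
    have hncdH : s(c,d) ∉ H.edgeSet := hX
    refine ncard_lt_of_subset_diff (y := s(a,d)) (Set.toFinite _)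
      (Or.inl ⟨habG, hnabH⟩) (Or.inl ⟨hcdG, hncdH⟩) (Or.inr ⟨hcbH, hncbG⟩)
      n1 n3 n5 ?_
    rintro e (⟨heE', heH⟩ | ⟨heH, heE'⟩)
    · rcases (hE' e).mp heE' with ⟨heG, hne1, hne2⟩ | rfl | rfl
      · refine Or.inl ⟨Or.inl ⟨heG, heH⟩, ?_⟩
        rintro (rfl | rfl | rfl)
        · exact hne1 rfl
        · exact hne2 rfl
        · exact hncbG heG
      · exact Or.inr rfl
      · exact absurd hcbH heH
    · have hecb : e ≠ s(c,b) := fun h => heE' ((hE' e).mpr (Or.inr (Or.inr h)))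
      by_cases heG : e ∈ G.edgeSet
      · have hor : e = s(a,b) ∨ e = s(c,d) := by
          by_contra hcon
          push_neg at hcon
          exact heE' ((hE' e).mpr (Or.inl ⟨heG, hcon.1, hcon.2⟩))
        rcases hor with rfl | rfl
        · exact absurd heH hnabH
        · exact absurd heH hncdH
      · refine Or.inl ⟨Or.inr ⟨heH, heG⟩, ?_⟩
        rintro (rfl | rfl | rfl)
        · exact heG habG
        · exact heG hcdG
        · exact hecb rfl
  · -- type B : ad ∈ H ; removed triple {ab, ad, cb}, possibly added cd
    have hadH : s(a,d) ∈ H.edgeSet := hX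
    refine ncard_lt_of_subset_diff (y := s(c,d)) (Set.toFinite _)
      (Or.inl ⟨habG, hnabH⟩) (Or.inr ⟨hadH, hnadG⟩) (Or.inr ⟨hcbH, hncbG⟩)
      n2 n3 n6 ?_
    rintro e (⟨heE', heH⟩ | ⟨heH, heE'⟩)
    · rcases (hE' e).mp heE' with ⟨heG, hne1, hne2⟩ | rfl | rfl
      · refine Or.inl ⟨Or.inl ⟨heG, heH⟩, ?_⟩
        rintro (rfl | rfl | rfl)
        · exact hne1 rfl
        · exact hnadG heG
        · exact hncbG heG
      · exact absurd hadH heH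
      · exact absurd hcbH heH
    · have head : e ≠ s(a,d) := fun h => heE' ((hE' e).mpr (Or.inr (Or.inl h)))
      have hecb : e ≠ s(c,b) := fun h => heE' ((hE' e).mpr (Or.inr (Or.inr h)))
      by_cases heG : e ∈ G.edgeSet
      · have hor : e = s(a,b) ∨ e = s(c,d) := by
          by_contra hcon
          push_neg at hcon
          exact heE' ((hE' e).mpr (Or.inl ⟨heG, hcon.1, hcon.2⟩))
        rcases hor with rfl | rfl
        · exact absurd heH hnabH
        · exact Or.inr rfl
      · refine Or.inl ⟨Or.inr ⟨heH, heG⟩, ?_⟩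
        rintro (rfl | rfl | rfl)
        · exact heG habG
        · exact head rfl
        · exact hecb rfl
end Meas


lemma twoSwitch_symm {G H : SimpleGraph V} (h : twoSwitch G H) : twoSwitch H G := by
  obtain ⟨a, b, c, d, hab, hcd, had, hcb, hnad, hncb, rfl⟩ := h
  exact twoSwitch_symm' hab hcd had hcb hnad hncb

lemma descent (G H : SimpleGraph V) (hdeg : ∀ v, gdeg G v = gdeg H v) (hne : G ≠ H) :
    ∃ G', (twoSwitch G G' ∧ meas G' H < meas G H ∧ ∀ v, gdeg G' v = gdeg G v) ∨
          (twoSwitch H G' ∧ meas G G' < meas G H ∧ ∀ v, gdeg G' v = gdeg H v) := by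
  have hdeg' : ∀ v, (G.neighborSet v).ncard = (H.neighborSet v).ncard := hdeg
  rcases exists_good G H hdeg' hne with ⟨a,b,c,d,h1,h2,h3,h4,h5,h6,h7,h8,h9⟩ |
    ⟨a,b,c,d,h1,h2,h3,h4,h5,h6,h7,h8,h9⟩
  · exact ⟨_, Or.inl ⟨⟨a,b,c,d,h1,h2,h3,h4,h5,h6,rfl⟩,
      meas_lt h1 h2 h3 h4 h5 h6 h7 h8 h9, gdeg_switch h1 h2 h3 h4 h5 h6⟩⟩
  · refine ⟨_, Or.inr ⟨⟨a,b,c,d,h1,h2,h3,h4,h5,h6,rfl⟩, ?_,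
      gdeg_switch h1 h2 h3 h4 h5 h6⟩⟩
    have hm := meas_lt h1 h2 h3 h4 h5 h6 h7 h8 h9
    rw [meas_comm G H, meas_comm G _]
    exact hm

lemma main (G H : SimpleGraph V) (hdeg : ∀ v, gdeg G v = gdeg H v) :
    Relation.ReflTransGen twoSwitch G H := by
  suffices key : ∀ (m : ℕ) (G H : SimpleGraph V), (∀ v, gdeg G v = gdeg H v) →
      meas G H ≤ m → Relation.ReflTransGen twoSwitch G H from
    key (meas G H) G H hdeg le_rfl
  intro m
  induction m with
  | zero =>
    intro G H hd hm
    have hempty : ((G.edgeSet \ H.edgeSet) ∪ (H.edgeSet \ G.edgeSet)) = ∅ :=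
      (Set.ncard_eq_zero (Set.toFinite _)).mp (Nat.le_zero.mp hm)
    rw [Set.eq_empty_iff_forall_notMem] at hempty
    have : G = H := by
      rw [← SimpleGraph.edgeSet_inj]
      apply Set.eq_of_subset_of_subset
      · intro e he
        by_contra hc
        exact hempty e (Or.inl ⟨he, hc⟩)
      · intro e he
        by_contra hc
        exact hempty e (Or.inr ⟨he, hc⟩)
    exact this ▸ Relation.ReflTransGen.refl
  | succ m ih =>
    intro G H hd hm
    by_cases hGH : G = H
    · exact hGH ▸ Relation.ReflTransGen.refl
    obtain ⟨G', hc⟩ := descent G H hd hGH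
    rcases hc with ⟨hsw, hlt, hdg⟩ | ⟨hsw, hlt, hdg⟩
    · exact Relation.ReflTransGen.head hsw
        (ih G' H (fun v => (hdg v).trans (hd v)) (by omega))
    · exact Relation.ReflTransGen.tail
        (ih G G' (fun v => (hd v).trans (hdg v).symm) (by omega))
        (twoSwitch_symm hsw)

end TaylorAux

/-- Taylor's theorem: if `G1` and `G2` are simple graphs on the same labeled vertex
set realizing the same non-increasing degree sequence `d_1 ≥ … ≥ d_n` (vertex `i`
having degree `d i` in both), then `G1` can be transformed into `G2` by a finite
sequence of 2-switches, every intermediate graph being simple with the same degrees. -/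
theorem stmt18 (n : ℕ) (d : Fin n → ℕ) (hsort : ∀ i j : Fin n, i ≤ j → d j ≤ d i)
    (G1 G2 : SimpleGraph (Fin n))
    (h1 : ∀ i, gdeg G1 i = d i) (h2 : ∀ i, gdeg G2 i = d i) :
    Relation.ReflTransGen twoSwitch G1 G2 :=
  TaylorAux.main G1 G2 (fun i => (h1 i).trans (h2 i).symm)
end

section
/- In the greedy JDM construction, after processing any set S of degree-pairs, the residual instance remains feasible: for every unprocessed pair (k,l) with k ≠ l, the residual edge count satisfies Ĵ_{k,l} ≤ D̂_k · D̂_l, and for every unprocessed (k,k), Ĵ_{k,k} ≤ C(D̂_k, 2), where D̂_k is the number of degree-k vertices with nonzero residual degree, provided that at every step the residual degrees of any two same-degree vertices differ by at most 1 and the original J satisfied the graphicality conditions. -/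
/-- Feasibility of the residual instance in the greedy JDM construction.

`V` is the vertex set with prescribed degrees `deg0` (all `< N`), `J` is a graphical
joint degree matrix (symmetric, supported on degrees `< N`, satisfying the
graphicality conditions `horig1`, `horig2` with respect to the vertex counts), and
`S` is the set of already-processed degree-pairs. `r v` is the residual degree of
vertex `v`. The balanced degree invariant `hbal` says residual degrees of same-degree
vertices differ by at most 1, and `hsum` says the residual degree-`k` endpoints
exactly cover the unprocessed entries `Ĵ_{k,l}` (an unprocessed diagonal entry
contributing `2·J_{k,k}`). Then the residual instance is feasible: for every
unprocessed pair `(k,l)` with `k ≠ l`, `Ĵ_{k,l} = J_{k,l} ≤ D̂_k · D̂_l`, and for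
every unprocessed `(k,k)`, `J_{k,k} ≤ C(D̂_k, 2)`, where `D̂_k` counts degree-`k`
vertices with nonzero residual degree. -/
theorem stmt19 {V : Type*} [Fintype V] [DecidableEq V] (N : ℕ) (J : ℕ → ℕ → ℕ)
    (deg0 r : V → ℕ) (S : Finset (Sym2 ℕ))
    (hsym : ∀ k l, J k l = J l k)
    (hsupp : ∀ k l, N ≤ k → J k l = 0)
    (hdeg : ∀ v, deg0 v < N)
    (hr : ∀ v, r v ≤ deg0 v)
    (horig1 : ∀ k l, k ≠ l →
      J k l ≤ (Finset.univ.filter (fun v => deg0 v = k)).card *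
              (Finset.univ.filter (fun v => deg0 v = l)).card)
    (horig2 : ∀ k,
      J k k ≤ ((Finset.univ.filter (fun v => deg0 v = k)).card).choose 2)
    (hbal : ∀ u v, deg0 u = deg0 v → r u ≤ r v + 1)
    (hsum : ∀ k, ∑ v ∈ Finset.univ.filter (fun v => deg0 v = k), r v =
      (if s(k, k) ∈ S then 0 else J k k) +
        ∑ l ∈ Finset.range N, (if s(k, l) ∈ S then 0 else J k l)) :
    (∀ k l, k ≠ l → s(k, l) ∉ S →
      J k l ≤ (Finset.univ.filter (fun v => deg0 v = k ∧ r v ≠ 0)).card *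
              (Finset.univ.filter (fun v => deg0 v = l ∧ r v ≠ 0)).card) ∧
    (∀ k, s(k, k) ∉ S →
      J k k ≤ ((Finset.univ.filter (fun v => deg0 v = k ∧ r v ≠ 0)).card).choose 2) := by
  classical
  set A : ℕ → Finset V := fun k => Finset.univ.filter (fun v => deg0 v = k) with hA
  set B : ℕ → Finset V := fun k => Finset.univ.filter (fun v => deg0 v = k ∧ r v ≠ 0) with hB
  have hBA : ∀ k, B k = (A k).filter (fun v => r v ≠ 0) := by
    intro k; simp [hA, hB, Finset.filter_filter]
  have hBsum : ∀ k, ∑ v ∈ B k, r v = ∑ v ∈ A k, r v := by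
    intro k; rw [hBA k]; exact Finset.sum_filter_ne_zero _
  -- unprocessed off-diagonal entry bounded by class residual sum
  have key : ∀ k l, l < N → s(k, l) ∉ S → J k l ≤ ∑ v ∈ A k, r v := by
    intro k l hl hS
    rw [hsum k]
    have h1 : J k l ≤ ∑ l' ∈ Finset.range N, (if s(k, l') ∈ S then 0 else J k l') := by
      have := Finset.single_le_sum (f := fun l' => if s(k, l') ∈ S then 0 else J k l')
        (fun i _ => Nat.zero_le _) (Finset.mem_range.mpr hl)
      simpa [hS] using this
    omega
  have keyd : ∀ k, k < N → s(k, k) ∉ S → 2 * J k k ≤ ∑ v ∈ A k, r v := by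
    intro k hk hS
    rw [hsum k]
    have h1 : J k k ≤ ∑ l' ∈ Finset.range N, (if s(k, l') ∈ S then 0 else J k l') := by
      have := Finset.single_le_sum (f := fun l' => if s(k, l') ∈ S then 0 else J k l')
        (fun i _ => Nat.zero_le _) (Finset.mem_range.mpr hk)
      simpa [hS] using this
    simp only [if_neg hS]
    omega
  -- if some vertex of class k has residual 0, the class residual sum equals (B k).card
  have hzero : ∀ k v, deg0 v = k → r v = 0 → ∑ u ∈ A k, r u = (B k).card := by
    intro k v hv hrv
    rw [← hBsum k]
    have hone : ∀ u ∈ B k, r u = 1 := by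
      intro u hu
      simp only [hB, Finset.mem_filter] at hu
      have := hbal u v (by rw [hu.2.1, hv])
      omega
    calc ∑ u ∈ B k, r u = ∑ _u ∈ B k, 1 := Finset.sum_congr rfl hone
      _ = (B k).card := by simp
  -- sum positive implies nonempty B
  have hpos : ∀ k, 0 < ∑ v ∈ A k, r v → 0 < (B k).card := by
    intro k hk
    rw [← hBsum k] at hk
    rw [Finset.card_pos]
    by_contra h
    rw [Finset.not_nonempty_iff_eq_empty] at h
    simp [h] at hk
  -- full class: if all residuals nonzero, B = A
  have hfull : ∀ k, (∀ v, deg0 v = k → r v ≠ 0) → B k = A k := by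
    intro k h
    rw [hBA k, Finset.filter_eq_self]
    intro v hv
    exact h v (by simpa [hA] using hv)
  constructor
  · intro k l hkl hS
    show J k l ≤ (B k).card * (B l).card
    by_cases hJ : J k l = 0
    · simp [hJ]
    by_cases hk : N ≤ k
    · exact absurd (hsupp k l hk) hJ
    by_cases hl : N ≤ l
    · exact absurd ((hsym k l).trans (hsupp l k hl)) hJ
    push_neg at hk hl
    have hS' : s(l, k) ∉ S := by rwa [Sym2.eq_swap]
    have hk1 : J k l ≤ ∑ v ∈ A k, r v := key k l hl hS
    have hl1 : J k l ≤ ∑ v ∈ A l, r v := by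
      rw [hsym k l]; exact key l k hk hS'
    have hBk : 0 < (B k).card := hpos k (lt_of_lt_of_le (Nat.pos_of_ne_zero hJ) hk1)
    have hBl : 0 < (B l).card := hpos l (lt_of_lt_of_le (Nat.pos_of_ne_zero hJ) hl1)
    by_cases hzk : ∃ v, deg0 v = k ∧ r v = 0
    · obtain ⟨v, hv1, hv2⟩ := hzk
      have := hzero k v hv1 hv2
      calc J k l ≤ (B k).card := by omega
        _ ≤ (B k).card * (B l).card := Nat.le_mul_of_pos_right _ hBl
    by_cases hzl : ∃ v, deg0 v = l ∧ r v = 0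
    · obtain ⟨v, hv1, hv2⟩ := hzl
      have := hzero l v hv1 hv2
      calc J k l ≤ (B l).card := by omega
        _ ≤ (B k).card * (B l).card := Nat.le_mul_of_pos_left _ hBk
    push_neg at hzk hzl
    rw [hfull k hzk, hfull l hzl]
    exact horig1 k l hkl
  · intro k hS
    show J k k ≤ ((B k).card).choose 2
    by_cases hJ : J k k = 0
    · simp [hJ]
    by_cases hk : N ≤ k
    · exact absurd (hsupp k k hk) hJ
    push_neg at hk
    have hk1 : 2 * J k k ≤ ∑ v ∈ A k, r v := keyd k hk hS
    have hBk : 0 < (B k).card := hpos k (by omega)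
    by_cases hzk : ∃ v, deg0 v = k ∧ r v = 0
    · obtain ⟨v, hv1, hv2⟩ := hzk
      have h2 : 2 * J k k ≤ (B k).card := by rw [← hzero k v hv1 hv2]; exact hk1
      have : J k k ≤ ((B k).card).choose 2 := by
        rw [Nat.choose_two_right]
        have : 2 * J k k ≤ (B k).card * ((B k).card - 1) := by
          calc 2 * J k k ≤ (B k).card := h2
            _ ≤ (B k).card * ((B k).card - 1) := by
                apply Nat.le_mul_of_pos_right
                omega
        omega
      exact this
    push_neg at hzk
    rw [hfull k hzk]
    exact horig2 k
end
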